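/- arXiv:2504.15242 — 4 statements merged into one kernel-verified Lean document; each statement's English description precedes it below -/
import Mathlib

section
/- Let χ : ℝ → ℝ be a kernel: χ ∈ L¹(ℝ), χ is bounded on a neighborhood of 0, ∑_{i∈ℤ} χ(z − i) = 1 for every z ∈ ℝ, and there exists β > 0 with m_β(χ) := sup_{z∈ℝ} ∑_{i∈ℤ} |χ(z − i)| · |z − i|^β < ∞. Fix α > 0. Let g : ℝ → ℝ be measurable and bounded on ℝ. Then at every point y ∈ ℝ at which g is continuous, lim_{w→∞} (T_w g)(y) = g(y). -/
open Real Filter MeasureTheory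

/-- Discrete absolute moment of order `0`: `μ₀(χ) = sup_{z ∈ ℝ} ∑_{i ∈ ℤ} |χ(z - i)|`. -/
noncomputable def mom0 (χ : ℝ → ℝ) : ℝ :=
  ⨆ z : ℝ, ∑' i : ℤ, |χ (z - ↑i)|

/-- The modified Kantorovich sampling operator
`(T_w g)(y) = ∑_{i ∈ ℤ} χ(wy - i) ∫₀¹ g((i + t^α)/(w+1)) dt`. -/
noncomputable def T (χ : ℝ → ℝ) (α w : ℝ) (g : ℝ → ℝ) (y : ℝ) : ℝ :=
  ∑' i : ℤ, χ (w * y - ↑i) * ∫ t in (0:ℝ)..(1:ℝ), g ((↑i + t ^ α) / (w + 1))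

lemma near_finite (z : ℝ) : {i : ℤ | |z - (i : ℝ)| < 1}.Finite := by
  apply Set.Finite.subset (Set.finite_Icc ⌈z - 1⌉ ⌊z + 1⌋)
  intro i hi
  simp only [Set.mem_setOf_eq, abs_lt] at hi
  exact Set.mem_Icc.mpr ⟨Int.ceil_le.mpr (by linarith [hi.2]), Int.le_floor.mpr (by linarith [hi.1])⟩

lemma summable_abs_ker {χ : ℝ → ℝ} {β : ℝ} (hβ : 0 < β)
    (hβsumm : ∀ z : ℝ, Summable fun i : ℤ => |χ (z - ↑i)| * |z - ↑i| ^ β) (z : ℝ) :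
    Summable fun i : ℤ => |χ (z - ↑i)| := by
  apply Summable.of_norm_bounded_eventually (hβsumm z)
  rw [Filter.eventually_cofinite]
  apply Set.Finite.subset (near_finite z)
  intro i hi
  simp only [Set.mem_setOf_eq, not_le, Real.norm_eq_abs, abs_abs] at hi
  simp only [Set.mem_setOf_eq]
  by_contra h
  push_neg at h
  have h1 : (1 : ℝ) ≤ |z - (i : ℝ)| ^ β := Real.one_le_rpow h hβ.le
  nlinarith [abs_nonneg (χ (z - (i : ℝ)))]

theorem stmt4 (χ : ℝ → ℝ)
    (hχInt : Integrable χ)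
    (hχbd : ∃ d : ℝ, 0 < d ∧ ∃ C : ℝ, ∀ z ∈ Set.Icc (-d) d, |χ z| ≤ C)
    (hχsum : ∀ z : ℝ, ∑' i : ℤ, χ (z - ↑i) = 1)
    (β : ℝ) (hβ : 0 < β)
    (hβsumm : ∀ z : ℝ, Summable fun i : ℤ => |χ (z - ↑i)| * |z - ↑i| ^ β)
    (hβbdd : BddAbove (Set.range fun z : ℝ => ∑' i : ℤ, |χ (z - ↑i)| * |z - ↑i| ^ β))
    (α : ℝ) (hα : 0 < α)
    (g : ℝ → ℝ) (hgMeas : Measurable g) (hgBdd : ∃ B : ℝ, ∀ u : ℝ, |g u| ≤ B)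
    (y : ℝ) (hgCont : ContinuousAt g y) :
    Tendsto (fun w : ℝ => T χ α w g y) atTop (nhds (g y)) := by
  classical
  obtain ⟨d, hd, C, hC⟩ := hχbd
  obtain ⟨B, hB⟩ := hgBdd
  have hB0 : 0 ≤ B := (abs_nonneg _).trans (hB 0)
  have hsumabs : ∀ z : ℝ, Summable fun i : ℤ => |χ (z - ↑i)| := summable_abs_ker hβ hβsumm
  have hsum : ∀ z : ℝ, Summable fun i : ℤ => χ (z - ↑i) := fun z => (hsumabs z).of_abs
  set Mβ : ℝ := ⨆ z : ℝ, ∑' i : ℤ, |χ (z - ↑i)| * |z - ↑i| ^ β with hMβdef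
  have hMβ : ∀ z : ℝ, ∑' i : ℤ, |χ (z - ↑i)| * |z - ↑i| ^ β ≤ Mβ := fun z => le_ciSup hβbdd z
  have hMβ0 : 0 ≤ Mβ := le_trans (tsum_nonneg fun i => by positivity) (hMβ 0)
  clear_value Mβ
  set d₀ : ℝ := min d 1 with hd₀def
  have hd₀ : 0 < d₀ := lt_min hd one_pos
  have hd₀1 : d₀ ≤ 1 := min_le_right _ _
  have hd₀d : d₀ ≤ d := min_le_left _ _
  have hd₀β : 0 < d₀ ^ β := Real.rpow_pos_of_pos hd₀ β
  set C' : ℝ := max C 0 with hC'def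
  have hC'0 : 0 ≤ C' := le_max_right _ _
  obtain ⟨M0, hM00, hM0⟩ :
      ∃ M0 : ℝ, 0 ≤ M0 ∧ ∀ z : ℝ, ∑' i : ℤ, |χ (z - ↑i)| ≤ M0 := by
    refine ⟨3 * C' + Mβ / d₀ ^ β,
      add_nonneg (by linarith [hC'0]) (div_nonneg hMβ0 hd₀β.le), ?_⟩
    intro z
    set s : Finset ℤ := Finset.Icc ⌈z - d₀⌉ ⌊z + d₀⌋ with hs
    have hle : ∀ i : ℤ, |χ (z - ↑i)| ≤
        (if i ∈ s then C' else 0) + |χ (z - ↑i)| * |z - ↑i| ^ β / d₀ ^ β := by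
      intro i
      by_cases hcase : |z - (i : ℝ)| ≤ d₀
      · have hi : i ∈ s := by
          rw [hs, Finset.mem_Icc]
          rw [abs_le] at hcase
          exact ⟨Int.ceil_le.mpr (by linarith [hcase.2]), Int.le_floor.mpr (by linarith [hcase.1])⟩
        rw [if_pos hi]
        have h1 : |χ (z - ↑i)| ≤ C' := by
          refine le_trans (hC _ ?_) (le_max_left _ _)
          rw [Set.mem_Icc, ← abs_le]
          exact hcase.trans hd₀d
        have h2 : 0 ≤ |χ (z - ↑i)| * |z - ↑i| ^ β / d₀ ^ β := by positivity
        linarith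
      · push_neg at hcase
        have h1 : d₀ ^ β ≤ |z - ↑i| ^ β := Real.rpow_le_rpow hd₀.le hcase.le hβ.le
        have h3 : |χ (z - ↑i)| ≤ |χ (z - ↑i)| * |z - ↑i| ^ β / d₀ ^ β := by
          rw [le_div_iff₀ hd₀β]
          nlinarith [abs_nonneg (χ (z - (i : ℝ)))]
        have h4 : (0 : ℝ) ≤ if i ∈ s then C' else 0 := by
          split <;> simp [hC'0]
        linarith
    have hsum1 : Summable fun i : ℤ => (if i ∈ s then C' else 0 : ℝ) :=
      summable_of_ne_finset_zero (s := s) fun i hi => if_neg hi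
    have hsum2 : Summable fun i : ℤ => |χ (z - ↑i)| * |z - ↑i| ^ β / d₀ ^ β :=
      (hβsumm z).div_const _
    have hcard : (s.card : ℝ) ≤ 3 := by
      have h5 : (⌊z + d₀⌋ : ℝ) ≤ z + 1 := le_trans (Int.floor_le _) (by linarith)
      have h6 : z - 1 ≤ (⌈z - d₀⌉ : ℝ) := le_trans (by linarith) (Int.le_ceil _)
      have h7 : (⌊z + d₀⌋ + 1 - ⌈z - d₀⌉ : ℤ) ≤ 3 := by
        have : ((⌊z + d₀⌋ + 1 - ⌈z - d₀⌉ : ℤ) : ℝ) ≤ 3 := by push_cast; linarith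
        exact_mod_cast this
      have h8 : s.card ≤ 3 := by
        rw [hs, Int.card_Icc]
        exact_mod_cast Int.toNat_le.mpr h7
      exact_mod_cast h8
    calc ∑' i : ℤ, |χ (z - ↑i)|
        ≤ ∑' i : ℤ, ((if i ∈ s then C' else 0) + |χ (z - ↑i)| * |z - ↑i| ^ β / d₀ ^ β) :=
          Summable.tsum_le_tsum hle (hsumabs z) (hsum1.add hsum2)
      _ = (∑' i : ℤ, (if i ∈ s then C' else 0 : ℝ))
            + ∑' i : ℤ, |χ (z - ↑i)| * |z - ↑i| ^ β / d₀ ^ β := Summable.tsum_add hsum1 hsum2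
      _ ≤ 3 * C' + Mβ / d₀ ^ β := by
          have e1 : (∑' i : ℤ, (if i ∈ s then C' else 0 : ℝ)) = s.card * C' := by
            rw [tsum_eq_sum (s := s) fun i hi => if_neg hi]
            rw [Finset.sum_congr rfl fun i hi => if_pos hi, Finset.sum_const, nsmul_eq_mul]
          have e2 : (∑' i : ℤ, |χ (z - ↑i)| * |z - ↑i| ^ β / d₀ ^ β)
              = (∑' i : ℤ, |χ (z - ↑i)| * |z - ↑i| ^ β) / d₀ ^ β := tsum_div_const
          rw [e1, e2]
          have e3 : (s.card : ℝ) * C' ≤ 3 * C' := mul_le_mul_of_nonneg_right hcard hC'0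
          have e4 : (∑' i : ℤ, |χ (z - ↑i)| * |z - ↑i| ^ β) / d₀ ^ β ≤ Mβ / d₀ ^ β := by
            gcongr
            exact hMβ z
          linarith
  rw [Metric.tendsto_nhds]
  intro ε hε
  have hM1 : 0 < M0 + 1 := by linarith
  obtain ⟨ε', hε', he5⟩ : ∃ ε' : ℝ, 0 < ε' ∧ ε' * (M0 + 1) = ε / 2 := by
    refine ⟨ε / (2 * (M0 + 1)), div_pos hε (by linarith), ?_⟩
    field_simp
  obtain ⟨δ, hδ, hδc⟩ := Metric.continuousAt_iff.mp hgCont ε' hε'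
  set R : ℝ → ℝ := fun w => δ * (w + 1) - (1 + |y|) with hRdef
  have hRtend : Tendsto R atTop atTop := by
    have h1 : Tendsto (fun w : ℝ => w + 1) atTop atTop := tendsto_atTop_add_const_right _ 1 tendsto_id
    have h2 := h1.const_mul_atTop hδ
    have h3 := tendsto_atTop_add_const_right atTop (-(1 + |y|)) h2
    simpa [hRdef, sub_eq_add_neg] using h3
  have hRβtend : Tendsto (fun w => R w ^ β) atTop atTop := (tendsto_rpow_atTop hβ).comp hRtend
  have hdiv : Tendsto (fun w => 2 * B / R w ^ β * Mβ) atTop (nhds 0) := by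
    have h1 : Tendsto (fun w => (2 * B) / R w ^ β) atTop (nhds 0) :=
      tendsto_const_nhds.div_atTop hRβtend
    simpa using h1.mul_const Mβ
  have he2 : ∀ᶠ w in atTop, 2 * B / R w ^ β * Mβ < ε / 2 :=
    hdiv.eventually_lt_const (by linarith)
  filter_upwards [eventually_ge_atTop (0 : ℝ), hRtend.eventually_ge_atTop 1, he2]
    with w hw0 hw1 hw2
  have hw1' : (0 : ℝ) < w + 1 := by linarith
  set z : ℝ := w * y with hz
  have hRw : R w = δ * (w + 1) - (1 + |y|) := by rw [hRdef]
  have hRpos : 0 < R w := lt_of_lt_of_le one_pos hw1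
  have hRβpos : 0 < R w ^ β := Real.rpow_pos_of_pos hRpos β
  set F : ℤ → ℝ → ℝ := fun i t => g ((↑i + t ^ α) / (w + 1)) with hF
  have hFmeas : ∀ i : ℤ, Measurable (F i) := fun i =>
    hgMeas.comp ((measurable_const.add (Real.continuous_rpow_const hα.le).measurable).div_const _)
  have hFbd : ∀ i : ℤ, ∀ t : ℝ, |F i t| ≤ B := fun i t => hB _
  have hFint : ∀ i : ℤ, IntervalIntegrable (F i) volume 0 1 := by
    intro i
    rw [intervalIntegrable_iff, Set.uIoc_of_le (by norm_num : (0:ℝ) ≤ 1)]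
    exact Integrable.mono' ((integrableOn_const_iff (C := B)).mpr (Or.inr measure_Ioc_lt_top))
      ((hFmeas i).aestronglyMeasurable.restrict)
      (ae_of_all _ fun t => by simpa [Real.norm_eq_abs] using hFbd i t)
  set I : ℤ → ℝ := fun i => ∫ t in (0:ℝ)..1, F i t with hI
  have hIbd : ∀ i : ℤ, |I i| ≤ B := by
    intro i
    have h1 := intervalIntegral.norm_integral_le_of_norm_le_const (C := B) (f := F i)
      (a := 0) (b := 1) (fun t _ => by simpa [Real.norm_eq_abs] using hFbd i t)
    simpa [Real.norm_eq_abs] using h1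
  have hIsub : ∀ i : ℤ, I i - g y = ∫ t in (0:ℝ)..1, (F i t - g y) := by
    intro i
    rw [intervalIntegral.integral_sub (hFint i) intervalIntegrable_const]
    simp [hI]
  have hkey : ∀ i : ℤ, |I i - g y| ≤ ε' + 2 * B / R w ^ β * |z - ↑i| ^ β := by
    intro i
    by_cases hcase : |z - ↑i| < R w
    · have hbd : ∀ t ∈ Set.uIoc (0 : ℝ) 1, ‖F i t - g y‖ ≤ ε' := by
        intro t ht
        rw [Set.uIoc_of_le (by norm_num : (0:ℝ) ≤ 1)] at ht
        have ht0 : 0 < t := ht.1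
        have ht1 : t ≤ 1 := ht.2
        have htα0 : 0 ≤ t ^ α := Real.rpow_nonneg ht0.le α
        have htα1 : t ^ α ≤ 1 := Real.rpow_le_one ht0.le ht1 hα.le
        have hnum : |(i : ℝ) + t ^ α - y * (w + 1)| < δ * (w + 1) := by
          have h0 : (i : ℝ) + t ^ α - y * (w + 1) = -(z - ↑i) + (t ^ α + -y) := by
            rw [hz]; ring
          have habs : |(i : ℝ) + t ^ α - y * (w + 1)| ≤ |z - ↑i| + (t ^ α + |y|) := by
            rw [h0]
            refine (abs_add_le _ _).trans ?_
            rw [abs_neg]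
            have : |t ^ α + -y| ≤ t ^ α + |y| :=
              (abs_add_le _ _).trans_eq (by rw [abs_of_nonneg htα0, abs_neg])
            linarith
          have : |z - ↑i| + (t ^ α + |y|) < δ * (w + 1) := by
            rw [hRw] at hcase
            linarith
          linarith
        have harg : |((i : ℝ) + t ^ α) / (w + 1) - y| < δ := by
          have heq : ((i : ℝ) + t ^ α) / (w + 1) - y = ((i : ℝ) + t ^ α - y * (w + 1)) / (w + 1) := by
            field_simp
          rw [heq, abs_div, abs_of_pos hw1', div_lt_iff₀ hw1']
          linarith [hnum]
        have h2 := hδc (show dist (((i : ℝ) + t ^ α) / (w + 1)) y < δ by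
          rw [Real.dist_eq]; exact harg)
        rw [Real.dist_eq] at h2
        simpa [hF, Real.norm_eq_abs] using h2.le
      have h3 := intervalIntegral.norm_integral_le_of_norm_le_const hbd
      rw [← hIsub i] at h3
      have h4 : |I i - g y| ≤ ε' := by simpa [Real.norm_eq_abs] using h3
      have h5 : 0 ≤ 2 * B / R w ^ β * |z - ↑i| ^ β :=
        mul_nonneg (div_nonneg (by linarith) hRβpos.le) (Real.rpow_nonneg (abs_nonneg _) _)
      linarith
    · push_neg at hcase
      have h1 : R w ^ β ≤ |z - ↑i| ^ β := Real.rpow_le_rpow hRpos.le hcase hβ.le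
      have h2 : |I i - g y| ≤ 2 * B := by
        have h2a := abs_add_le (I i) (-(g y))
        rw [abs_neg] at h2a
        rw [sub_eq_add_neg]
        have := hIbd i
        have := hB y
        linarith
      have h3 : 2 * B ≤ 2 * B / R w ^ β * |z - ↑i| ^ β := by
        rw [div_mul_eq_mul_div, le_div_iff₀ hRβpos]
        nlinarith
      linarith [hε'.le]
  clear_value z F I
  have hS1 : Summable fun i : ℤ => χ (z - ↑i) * I i :=
    Summable.of_norm_bounded ((hsumabs z).mul_right B) fun i => by
      rw [Real.norm_eq_abs, abs_mul]
      exact mul_le_mul_of_nonneg_left (hIbd i) (abs_nonneg _)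
  have hS2 : Summable fun i : ℤ => χ (z - ↑i) * g y := (hsum z).mul_right _
  have hmaj : Summable fun i : ℤ =>
      ε' * |χ (z - ↑i)| + 2 * B / R w ^ β * (|χ (z - ↑i)| * |z - ↑i| ^ β) :=
    ((hsumabs z).mul_left _).add ((hβsumm z).mul_left _)
  have hptwise : ∀ i : ℤ, |χ (z - ↑i) * (I i - g y)| ≤
      ε' * |χ (z - ↑i)| + 2 * B / R w ^ β * (|χ (z - ↑i)| * |z - ↑i| ^ β) := by
    intro i
    rw [abs_mul]
    calc |χ (z - ↑i)| * |I i - g y|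
        ≤ |χ (z - ↑i)| * (ε' + 2 * B / R w ^ β * |z - ↑i| ^ β) :=
          mul_le_mul_of_nonneg_left (hkey i) (abs_nonneg _)
      _ = ε' * |χ (z - ↑i)| + 2 * B / R w ^ β * (|χ (z - ↑i)| * |z - ↑i| ^ β) := by ring
  have habs3 : Summable fun i : ℤ => |χ (z - ↑i) * (I i - g y)| :=
    Summable.of_norm_bounded hmaj fun i => by
      rw [Real.norm_eq_abs, abs_abs]; exact hptwise i
  have hTsub : T χ α w g y - g y = ∑' i : ℤ, χ (z - ↑i) * (I i - g y) := by
    have hTeq : T χ α w g y = ∑' i : ℤ, χ (z - ↑i) * I i := by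
      simp only [T, hI, hF, hz]
    have h3 : ∑' i : ℤ, χ (z - ↑i) * (I i - g y)
        = (∑' i : ℤ, χ (z - ↑i) * I i) - ∑' i : ℤ, χ (z - ↑i) * g y := by
      rw [← (hS1.hasSum.sub hS2.hasSum).tsum_eq]
      exact tsum_congr fun i => mul_sub _ _ _
    rw [hTeq, h3, tsum_mul_right, hχsum z, one_mul]
  have hfinal : dist (T χ α w g y) (g y) ≤ ε' * M0 + 2 * B / R w ^ β * Mβ := by
    rw [Real.dist_eq, hTsub]
    calc |∑' i : ℤ, χ (z - ↑i) * (I i - g y)|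
        ≤ ∑' i : ℤ, |χ (z - ↑i) * (I i - g y)| := by
          simpa only [Real.norm_eq_abs] using
            norm_tsum_le_tsum_norm (f := fun i : ℤ => χ (z - ↑i) * (I i - g y))
              (by simpa only [Real.norm_eq_abs] using habs3)
      _ ≤ ∑' i : ℤ, (ε' * |χ (z - ↑i)| + 2 * B / R w ^ β * (|χ (z - ↑i)| * |z - ↑i| ^ β)) :=
          Summable.tsum_le_tsum hptwise habs3 hmaj
      _ = ε' * (∑' i : ℤ, |χ (z - ↑i)|)
            + 2 * B / R w ^ β * ∑' i : ℤ, |χ (z - ↑i)| * |z - ↑i| ^ β := by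
          rw [Summable.tsum_add ((hsumabs z).mul_left _) ((hβsumm z).mul_left _),
            tsum_mul_left, tsum_mul_left]
      _ ≤ ε' * M0 + 2 * B / R w ^ β * Mβ := by
          have g1 : ε' * (∑' i : ℤ, |χ (z - ↑i)|) ≤ ε' * M0 :=
            mul_le_mul_of_nonneg_left (hM0 z) hε'.le
          have g2 : 2 * B / R w ^ β * (∑' i : ℤ, |χ (z - ↑i)| * |z - ↑i| ^ β)
              ≤ 2 * B / R w ^ β * Mβ :=
            mul_le_mul_of_nonneg_left (hMβ z) (div_nonneg (by linarith) hRβpos.le)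
          exact add_le_add g1 g2
  have h4 : ε' * M0 ≤ ε / 2 := by nlinarith [hε'.le]
  calc dist (T χ α w g y) (g y) ≤ ε' * M0 + 2 * B / R w ^ β * Mβ := hfinal
    _ < ε := by linarith
end

section
/- Let χ : ℝ → ℝ be a kernel: χ ∈ L¹(ℝ), χ is bounded on a neighborhood of 0, ∑_{i∈ℤ} χ(z − i) = 1 for every z ∈ ℝ, and there exists β > 0 with m_β(χ) := sup_{z∈ℝ} ∑_{i∈ℤ} |χ(z − i)| · |z − i|^β < ∞. Fix α > 0. Let η : [0,∞) → [0,∞) be convex, non-decreasing, with η(0) = 0 and η(x) > 0 for x > 0. Then for every continuous function g : ℝ → ℝ with compact support and every λ > 0, lim_{w→∞} ∫_ℝ η(λ |(T_w g)(y) − g(y)|) dy = 0. -/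
set_option maxHeartbeats 1000000

open Real Filter MeasureTheory

private lemma eta_slope {η : ℝ → ℝ} (hconv : ConvexOn ℝ (Set.Ici 0) η) (hη0 : η 0 = 0)
    {x X : ℝ} (hx : 0 ≤ x) (hxX : x ≤ X) (hX : 0 < X) : η x ≤ x / X * η X := by
  have hd : x / X ≤ 1 := (div_le_one hX).2 hxX
  have hd0 : (0:ℝ) ≤ x / X := by positivity
  have h := hconv.2 (Set.mem_Ici.2 (le_refl (0:ℝ))) (Set.mem_Ici.2 hX.le)
    (show (0:ℝ) ≤ 1 - x / X by linarith) hd0 (by ring)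
  have hx' : (1 - x / X) • (0:ℝ) + (x / X) • X = x := by
    simp only [smul_eq_mul, mul_zero, zero_add]
    field_simp
  rw [hx'] at h
  simpa [hη0] using h

private lemma map_affine {w : ℝ} (hw : 0 < w) (c : ℝ) :
    Measure.map (fun y : ℝ => w * y - c) volume = ENNReal.ofReal w⁻¹ • volume := by
  have h1 : (fun y : ℝ => w * y - c) = (fun u : ℝ => u + (-c)) ∘ (fun y : ℝ => w * y) := by
    funext y; simp [sub_eq_add_neg]
  rw [h1, ← Measure.map_map (by fun_prop) (by fun_prop),
    Real.map_volume_mul_left hw.ne', Measure.map_smul,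
    map_add_right_eq_self volume (-c), abs_of_pos (inv_pos.2 hw)]

private lemma qmp_affine {w : ℝ} (hw : 0 < w) (c : ℝ) :
    Measure.QuasiMeasurePreserving (fun y : ℝ => w * y - c) volume volume := by
  refine ⟨by fun_prop, ?_⟩
  rw [map_affine hw c]
  exact (Measure.absolutelyContinuous_of_le_smul (c := ENNReal.ofReal w⁻¹) le_rfl)

private lemma lintegral_affine {w : ℝ} (hw : 0 < w) (c : ℝ) {F : ℝ → ENNReal}
    (hF : AEMeasurable F volume) :
    ∫⁻ y : ℝ, F (w * y - c) = ENNReal.ofReal w⁻¹ * ∫⁻ v, F v := by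
  have h := MeasureTheory.lintegral_map' (μ := volume) (g := fun y : ℝ => w * y - c)
    (f := F) (by rw [map_affine hw c]; exact hF.smul_measure _) (by fun_prop)
  rw [← h, map_affine hw c, lintegral_smul_measure, smul_eq_mul]


private lemma near_zero_outside {d C z : ℝ} : ∀ i ∉ Finset.Icc ⌈z - d⌉ ⌊z + d⌋,
    (if |z - (i:ℝ)| ≤ d then C else 0) = 0 := by
  intro i hi
  rw [if_neg]
  intro habs
  apply hi
  rcases abs_le.1 habs with ⟨h1, h2⟩
  rw [Finset.mem_Icc]
  exact ⟨Int.ceil_le.2 (by linarith), Int.le_floor.2 (by linarith)⟩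

private lemma near_summable {d : ℝ} (C : ℝ) (z : ℝ) :
    Summable (fun i : ℤ => if |z - (i:ℝ)| ≤ d then C else 0) :=
  summable_of_ne_finset_zero near_zero_outside

private lemma near_tsum_le {d C : ℝ} (hd : 0 < d) (hC0 : 0 ≤ C) (z : ℝ) :
    (∑' i : ℤ, if |z - (i:ℝ)| ≤ d then C else 0) ≤ C * (2 * d + 2) := by
  rw [tsum_eq_sum near_zero_outside]
  have hcard := Finset.sum_le_card_nsmul (Finset.Icc ⌈z - d⌉ ⌊z + d⌋)
    (fun i => if |z - (i:ℝ)| ≤ d then C else 0) C (by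
      intro i _
      by_cases h : |z - (i:ℝ)| ≤ d <;> simp [h, hC0])
  rw [Int.card_Icc, nsmul_eq_mul] at hcard
  refine le_trans hcard ?_
  have hcast : (((⌊z + d⌋ + 1 - ⌈z - d⌉).toNat : ℕ) : ℝ) ≤ 2 * d + 2 := by
    rcases le_or_gt (⌊z + d⌋ + 1 - ⌈z - d⌉) 0 with h | h
    · rw [Int.toNat_of_nonpos h]; norm_num; linarith
    · have heq : (((⌊z + d⌋ + 1 - ⌈z - d⌉).toNat : ℕ) : ℝ)
          = (((⌊z + d⌋ + 1 - ⌈z - d⌉ : ℤ)) : ℝ) := by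
        rw [← Int.cast_natCast, Int.toNat_of_nonneg h.le]
      rw [heq]
      have h1 : (⌊z + d⌋ : ℝ) ≤ z + d := Int.floor_le _
      have h2 : z - d ≤ (⌈z - d⌉ : ℝ) := Int.le_ceil _
      push_cast
      linarith
  calc (((⌊z + d⌋ + 1 - ⌈z - d⌉).toNat : ℕ) : ℝ) * C ≤ (2 * d + 2) * C :=
        mul_le_mul_of_nonneg_right hcast hC0
    _ = C * (2 * d + 2) := by ring

private lemma chi_pointwise_le {χ : ℝ → ℝ} {d C : ℝ} (hd : 0 < d)
    (hC : ∀ z ∈ Set.Icc (-d) d, |χ z| ≤ C) {β : ℝ} (hβ : 0 < β) (z : ℝ) (i : ℤ) :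
    |χ (z - ↑i)| ≤
      (if |z - (i:ℝ)| ≤ d then C else 0) + |χ (z - ↑i)| * |z - ↑i| ^ β / d ^ β := by
  have hdp : (0:ℝ) < d ^ β := Real.rpow_pos_of_pos hd β
  by_cases h : |z - (i:ℝ)| ≤ d
  · have h1 : |χ (z - i)| ≤ C := hC _ (Set.mem_Icc.2 (abs_le.1 h))
    have h2 : (0:ℝ) ≤ |χ (z - ↑i)| * |z - ↑i| ^ β / d ^ β := by positivity
    simp only [if_pos h]; linarith
  · push_neg at h
    have hrp : d ^ β ≤ |z - (i:ℝ)| ^ β := Real.rpow_le_rpow hd.le h.le hβ.le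
    have hmain : |χ (z - ↑i)| ≤ |χ (z - ↑i)| * |z - ↑i| ^ β / d ^ β := by
      rw [mul_div_assoc]
      nth_rewrite 1 [← mul_one (|χ (z - ↑i)|)]
      exact mul_le_mul_of_nonneg_left ((one_le_div hdp).2 hrp) (abs_nonneg _)
    simp only [if_neg (not_le.2 h)]; linarith

private lemma summable_abs_chi {χ : ℝ → ℝ} {d C : ℝ} (hd : 0 < d)
    (hC : ∀ z ∈ Set.Icc (-d) d, |χ z| ≤ C) {β : ℝ} (hβ : 0 < β)
    (hβsumm : ∀ z : ℝ, Summable fun i : ℤ => |χ (z - ↑i)| * |z - ↑i| ^ β) (z : ℝ) :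
    Summable fun i : ℤ => |χ (z - ↑i)| := by
  have hfar := (hβsumm z).div_const (d ^ β)
  exact Summable.of_nonneg_of_le (fun i => abs_nonneg _)
    (chi_pointwise_le hd hC hβ z) ((near_summable C z).add hfar)

private lemma tsum_abs_chi_le {χ : ℝ → ℝ} {d C : ℝ} (hd : 0 < d)
    (hC : ∀ z ∈ Set.Icc (-d) d, |χ z| ≤ C) {β : ℝ} (hβ : 0 < β)
    (hβsumm : ∀ z : ℝ, Summable fun i : ℤ => |χ (z - ↑i)| * |z - ↑i| ^ β)
    {mb : ℝ} (hmb : ∀ z : ℝ, (∑' i : ℤ, |χ (z - ↑i)| * |z - ↑i| ^ β) ≤ mb) (z : ℝ) :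
    (∑' i : ℤ, |χ (z - ↑i)|) ≤ C * (2 * d + 2) + mb / d ^ β := by
  have hC0 : 0 ≤ C := le_trans (abs_nonneg _) (hC 0 ⟨by linarith, hd.le⟩)
  have hfar := (hβsumm z).div_const (d ^ β)
  have hdp : (0:ℝ) < d ^ β := Real.rpow_pos_of_pos hd β
  calc (∑' i : ℤ, |χ (z - ↑i)|)
      ≤ ∑' i : ℤ, ((if |z - (i:ℝ)| ≤ d then C else 0) + |χ (z - ↑i)| * |z - ↑i| ^ β / d ^ β) :=
        Summable.tsum_le_tsum (chi_pointwise_le hd hC hβ z) (summable_abs_chi hd hC hβ hβsumm z)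
          ((near_summable C z).add hfar)
    _ = (∑' i : ℤ, if |z - (i:ℝ)| ≤ d then C else 0)
        + ∑' i : ℤ, |χ (z - ↑i)| * |z - ↑i| ^ β / d ^ β :=
        Summable.tsum_add (near_summable C z) hfar
    _ ≤ C * (2 * d + 2) + mb / d ^ β := by
        apply add_le_add (near_tsum_le hd hC0 z)
        rw [tsum_div_const]
        exact (div_le_div_iff_of_pos_right hdp).2 (hmb z)

private noncomputable def tau (χ : ℝ → ℝ) (R : ℝ) : ENNReal :=
  ∫⁻ v : ℝ, ENNReal.ofReal (if R ≤ |v| then |χ v| else 0)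

private lemma tau_aemeas {χ : ℝ → ℝ} (hχ : AEMeasurable χ (volume : Measure ℝ)) (R : ℝ) :
    AEMeasurable (fun v : ℝ => ENNReal.ofReal (if R ≤ |v| then |χ v| else 0)) volume := by
  have h1 : (fun v : ℝ => ENNReal.ofReal (if R ≤ |v| then |χ v| else 0))
      = Set.indicator {v : ℝ | R ≤ |v|} (fun v => ENNReal.ofReal |χ v|) := by
    funext v
    rw [Set.indicator_apply]
    by_cases h : R ≤ |v| <;> simp [h, Set.mem_setOf_eq]
  rw [h1]
  have habs : AEMeasurable (fun v : ℝ => |χ v|) volume := by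
    simpa [Real.norm_eq_abs] using hχ.norm
  exact (habs.ennreal_ofReal).indicator (measurableSet_le measurable_const continuous_abs.measurable)

private lemma not_mem_Icc_3M {M y : ℝ} (hM : 0 < M) (hy : y ∉ Set.Icc (-(3*M)) (3*M)) :
    3 * M < |y| := by
  rw [Set.mem_Icc] at hy
  push_neg at hy
  rcases le_or_gt (-(3*M)) y with h | h
  · have := hy h
    rw [abs_of_pos (by linarith)]
    exact this
  · rw [abs_of_neg (by linarith)]
    linarith

set_option maxHeartbeats 1000000 in
private lemma tail_integral {χ : ℝ → ℝ} (hχInt : Integrable χ)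
    (hsum : ∀ z : ℝ, Summable fun i : ℤ => |χ (z - ↑i)|)
    {M : ℝ} (hM : 1 ≤ M) {c₂ : ℝ} (hc₂ : 0 ≤ c₂)
    {w : ℝ} (hw : 7 ≤ w) :
    (∫⁻ y in (Set.Icc (-(3*M)) (3*M))ᶜ, ENNReal.ofReal
      (c₂ * ∑' i : ℤ, (if |(i:ℝ)| ≤ M * (w + 1) + 1 then |χ (w * y - ↑i)| else 0)))
      ≤ ENNReal.ofReal (3 * M * c₂) * tau χ (M * w) := by
  have hw0 : (0:ℝ) < w := by linarith
  have hM0 : (0:ℝ) < M := by linarith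
  set S := Set.Icc (-(3*M)) (3*M) with hSdef
  set N := M * (w + 1) + 1 with hNdef
  set h : ℤ → ℝ → ℝ := fun i y => if |(i:ℝ)| ≤ N then |χ (w * y - ↑i)| else 0 with hhdef
  have hh_nonneg : ∀ i y, 0 ≤ h i y := by
    intro i y; simp only [hhdef]; split <;> simp [abs_nonneg]
  have hh_le : ∀ i y, h i y ≤ |χ (w * y - ↑i)| := by
    intro i y; simp only [hhdef]; split <;> simp [abs_nonneg]
  have hsummh : ∀ y : ℝ, Summable fun i => h i y :=
    fun y => Summable.of_nonneg_of_le (fun i => hh_nonneg i y) (fun i => hh_le i y) (hsum (w * y))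
  have habs : AEMeasurable (fun v : ℝ => |χ v|) volume := by
    simpa [Real.norm_eq_abs] using hχInt.aemeasurable.norm
  -- pointwise equality with tsum of ofReal
  have hstep1 : ∀ y : ℝ, ENNReal.ofReal (c₂ * ∑' i : ℤ, h i y)
      = ∑' i : ℤ, ENNReal.ofReal (c₂ * h i y) := by
    intro y
    rw [← tsum_mul_left]
    exact ENNReal.ofReal_tsum_of_nonneg (fun i => mul_nonneg hc₂ (hh_nonneg i y))
      ((hsummh y).mul_left c₂)
  have haemeas : ∀ i : ℤ, AEMeasurable (fun y : ℝ => ENNReal.ofReal (c₂ * h i y)) volume := by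
    intro i
    by_cases hc : |(i:ℝ)| ≤ N
    · have : (fun y : ℝ => ENNReal.ofReal (c₂ * h i y))
          = (fun v : ℝ => ENNReal.ofReal (c₂ * |χ v|)) ∘ (fun y : ℝ => w * y - (i:ℝ)) := by
        funext y
        simp only [hhdef, if_pos hc, Function.comp]
      rw [this]
      exact ((habs.const_mul c₂).ennreal_ofReal).comp_quasiMeasurePreserving (qmp_affine hw0 _)
    · have : (fun y : ℝ => ENNReal.ofReal (c₂ * h i y)) = fun _ => 0 := by
        funext y
        simp only [hhdef, if_neg hc]
        simp
      rw [this]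
      exact aemeasurable_const
  have hSmeas : MeasurableSet S := measurableSet_Icc
  calc (∫⁻ y in Sᶜ, ENNReal.ofReal (c₂ * ∑' i : ℤ, h i y))
      = ∫⁻ y in Sᶜ, ∑' i : ℤ, ENNReal.ofReal (c₂ * h i y) :=
        lintegral_congr (fun y => hstep1 y)
    _ = ∑' i : ℤ, ∫⁻ y in Sᶜ, ENNReal.ofReal (c₂ * h i y) :=
        lintegral_tsum (fun i => (haemeas i).restrict)
    _ ≤ ∑' i : ℤ, (if |(i:ℝ)| ≤ N then
          ENNReal.ofReal c₂ * (ENNReal.ofReal w⁻¹ * tau χ (M * w)) else 0) := by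
        apply ENNReal.tsum_le_tsum
        intro i
        by_cases hc : |(i:ℝ)| ≤ N
        · rw [if_pos hc]
          have hpt : ∀ y ∈ Sᶜ, ENNReal.ofReal (c₂ * h i y) ≤ ENNReal.ofReal c₂ *
              ENNReal.ofReal (if M * w ≤ |w * y - (i:ℝ)| then |χ (w * y - (i:ℝ))| else 0) := by
            intro y hy
            have hy3 : 3 * M < |y| := not_mem_Icc_3M hM0 hy
            have hfar : M * w ≤ |w * y - (i:ℝ)| := by
              have h3 := abs_sub_abs_le_abs_sub (w * y) ((i:ℝ))
              have h4 : |w * y| = w * |y| := by rw [abs_mul, abs_of_pos hw0]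
              have hc' : |(i:ℝ)| ≤ M * (w + 1) + 1 := by rw [hNdef] at hc; exact hc
              nlinarith
            rw [if_pos hfar]
            simp only [hhdef, if_pos hc]
            rw [ENNReal.ofReal_mul hc₂]
          calc (∫⁻ y in Sᶜ, ENNReal.ofReal (c₂ * h i y))
              ≤ ∫⁻ y in Sᶜ, ENNReal.ofReal c₂ *
                ENNReal.ofReal (if M * w ≤ |w * y - (i:ℝ)| then |χ (w * y - (i:ℝ))| else 0) :=
                lintegral_mono_ae ((ae_restrict_mem hSmeas.compl).mono hpt)
            _ ≤ ∫⁻ y : ℝ, ENNReal.ofReal c₂ *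
                ENNReal.ofReal (if M * w ≤ |w * y - (i:ℝ)| then |χ (w * y - (i:ℝ))| else 0) :=
                setLIntegral_le_lintegral _ _
            _ = ENNReal.ofReal c₂ * ∫⁻ y : ℝ,
                ENNReal.ofReal (if M * w ≤ |w * y - (i:ℝ)| then |χ (w * y - (i:ℝ))| else 0) :=
                lintegral_const_mul' _ _ ENNReal.ofReal_ne_top
            _ = ENNReal.ofReal c₂ * (ENNReal.ofReal w⁻¹ * tau χ (M * w)) := by
                rw [lintegral_affine hw0 ((i:ℝ))
                  (F := fun v => ENNReal.ofReal (if M * w ≤ |v| then |χ v| else 0))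
                  (tau_aemeas hχInt.aemeasurable (M * w))]
                rfl
        · rw [if_neg hc]
          have hz : ∀ y : ℝ, ENNReal.ofReal (c₂ * h i y) = 0 := by
            intro y
            simp only [hhdef, if_neg hc]
            simp
          simp [hz]
    _ ≤ ((Finset.Icc (-⌈N⌉) ⌈N⌉).card) •
          (ENNReal.ofReal c₂ * (ENNReal.ofReal w⁻¹ * tau χ (M * w))) := by
        rw [tsum_eq_sum (s := Finset.Icc (-⌈N⌉) ⌈N⌉) (by
          intro i hi
          rw [if_neg]
          intro hcond
          apply hi
          have h0 : |(i:ℝ)| ≤ (⌈N⌉ : ℝ) := le_trans hcond (Int.le_ceil N)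
          rcases abs_le.1 h0 with ⟨h1, h2⟩
          rw [Finset.mem_Icc]
          constructor
          · exact_mod_cast h1
          · exact_mod_cast h2)]
        have hterm : ∀ i ∈ Finset.Icc (-⌈N⌉) ⌈N⌉, (if |(i:ℝ)| ≤ N then
            ENNReal.ofReal c₂ * (ENNReal.ofReal w⁻¹ * tau χ (M * w)) else 0) ≤
            ENNReal.ofReal c₂ * (ENNReal.ofReal w⁻¹ * tau χ (M * w)) := by
          intro i _
          by_cases hif : |(i:ℝ)| ≤ N
          · rw [if_pos hif]
          · rw [if_neg hif]; exact zero_le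
        exact Finset.sum_le_card_nsmul _ _ _ hterm
    _ ≤ ENNReal.ofReal (3 * M * w) *
          (ENNReal.ofReal c₂ * (ENNReal.ofReal w⁻¹ * tau χ (M * w))) := by
        rw [nsmul_eq_mul]
        apply mul_le_mul_left
        have hcard : (((Finset.Icc (-⌈N⌉) ⌈N⌉).card : ℕ) : ℝ) ≤ 3 * M * w := by
          rw [Int.card_Icc]
          rcases le_or_gt (⌈N⌉ + 1 - (-⌈N⌉)) 0 with hle | hlt
          · rw [Int.toNat_of_nonpos hle]
            norm_num
            positivity
          · have heq : (((⌈N⌉ + 1 - (-⌈N⌉)).toNat : ℕ) : ℝ)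
                = ((⌈N⌉ + 1 - (-⌈N⌉) : ℤ) : ℝ) := by
              rw [← Int.cast_natCast, Int.toNat_of_nonneg hlt.le]
            rw [heq]
            push_cast
            have hNceil : (⌈N⌉ : ℝ) < N + 1 := Int.ceil_lt_add_one N
            have hNval : N = M * (w + 1) + 1 := hNdef
            nlinarith [mul_le_mul_of_nonneg_left hw hM0.le]
        calc ((Finset.Icc (-⌈N⌉) ⌈N⌉).card : ENNReal)
            = ENNReal.ofReal (((Finset.Icc (-⌈N⌉) ⌈N⌉).card : ℕ) : ℝ) := by
              rw [ENNReal.ofReal_natCast]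
          _ ≤ ENNReal.ofReal (3 * M * w) := ENNReal.ofReal_le_ofReal hcard
    _ = ENNReal.ofReal (3 * M * c₂) * tau χ (M * w) := by
        have hre : ENNReal.ofReal (3 * M * w) * (ENNReal.ofReal c₂ *
            (ENNReal.ofReal w⁻¹ * tau χ (M * w)))
            = (ENNReal.ofReal (3 * M * w) * ENNReal.ofReal c₂ * ENNReal.ofReal w⁻¹)
              * tau χ (M * w) := by ring
        rw [hre, ← ENNReal.ofReal_mul (by positivity), ← ENNReal.ofReal_mul (by positivity)]
        congr 1
        field_simp

private lemma tau_anti {χ : ℝ → ℝ} {R R' : ℝ} (h : R ≤ R') : tau χ R' ≤ tau χ R := by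
  apply lintegral_mono
  intro v
  apply ENNReal.ofReal_le_ofReal
  by_cases h' : R' ≤ |v|
  · rw [if_pos h', if_pos (le_trans h h')]
  · rw [if_neg h']
    split <;> simp [abs_nonneg]

private lemma tau_small {χ : ℝ → ℝ} (hχInt : Integrable (χ : ℝ → ℝ)) :
    ∀ e : ENNReal, 0 < e → ∃ n : ℕ, tau χ (n : ℝ) ≤ e := by
  intro e he
  have hbound : (∫⁻ v : ℝ, ENNReal.ofReal |χ v|) ≠ ⊤ := by
    have h2 := hχInt.2
    rw [HasFiniteIntegral] at h2
    have heq : ∀ v, ENNReal.ofReal |χ v| = ‖χ v‖ₑ := by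
      intro v
      rw [← Real.norm_eq_abs, ofReal_norm]
    simp only [heq]
    exact h2.ne
  have htend : Tendsto (fun n : ℕ => tau χ (n : ℝ)) atTop (nhds 0) := by
    have h0 : (0 : ENNReal) = ∫⁻ _ : ℝ, (fun _ => (0:ENNReal)) 0 := by simp
    rw [show (0 : ENNReal) = ∫⁻ _ : ℝ, (0:ENNReal) by simp]
    apply MeasureTheory.tendsto_lintegral_of_dominated_convergence'
      (bound := fun v => ENNReal.ofReal |χ v|)
    · exact fun n => tau_aemeas hχInt.aemeasurable _
    · intro n
      apply Filter.Eventually.of_forall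
      intro v
      apply ENNReal.ofReal_le_ofReal
      split <;> simp [abs_nonneg]
    · exact hbound
    · apply Filter.Eventually.of_forall
      intro v
      have : ∀ᶠ n : ℕ in atTop, ENNReal.ofReal (if (n:ℝ) ≤ |v| then |χ v| else 0) = 0 := by
        rw [eventually_atTop]
        refine ⟨⌊|v|⌋₊ + 1, fun n hn => ?_⟩
        rw [if_neg, ENNReal.ofReal_zero]
        push_neg
        calc |v| < (⌊|v|⌋₊ + 1 : ℕ) := by
              push_cast
              exact Nat.lt_floor_add_one _
          _ ≤ (n : ℝ) := by exact_mod_cast Nat.cast_le.2 hn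
      have this' : (fun n : ℕ => ENNReal.ofReal (if (n:ℝ) ≤ |v| then |χ v| else 0))
          =ᶠ[atTop] (fun _ => (0:ENNReal)) := this
      exact tendsto_const_nhds.congr' this'.symm
  rw [ENNReal.tendsto_nhds_zero] at htend
  obtain ⟨n, hn⟩ := (htend e he).exists
  exact ⟨n, hn⟩

private lemma cont_integrand {g : ℝ → ℝ} (hgCont : Continuous g) {α : ℝ} (hα : 0 < α)
    (a b : ℝ) : Continuous fun t : ℝ => g ((a + t ^ α) / b) := by
  have h1 : Continuous fun t : ℝ => t ^ α := by
    rw [continuous_iff_continuousAt]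
    exact fun x => Real.continuousAt_rpow_const x α (Or.inr hα.le)
  fun_prop

private lemma rpow_mem {t : ℝ} (ht : t ∈ Set.Ioc (0:ℝ) 1) {α : ℝ} (hα : 0 < α) :
    0 ≤ t ^ α ∧ t ^ α ≤ 1 :=
  ⟨Real.rpow_nonneg ht.1.le α, Real.rpow_le_one ht.1.le ht.2 hα.le⟩

private lemma unif_conv {χ : ℝ → ℝ}
    (hχsum : ∀ z : ℝ, ∑' i : ℤ, χ (z - ↑i) = 1)
    {β : ℝ} (hβ : 0 < β)
    (hβsumm : ∀ z : ℝ, Summable fun i : ℤ => |χ (z - ↑i)| * |z - ↑i| ^ β)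
    {mb : ℝ} (hmb0 : 0 ≤ mb)
    (hmb : ∀ z : ℝ, (∑' i : ℤ, |χ (z - ↑i)| * |z - ↑i| ^ β) ≤ mb)
    {K0 : ℝ} (hK0 : ∀ z : ℝ, (∑' i : ℤ, |χ (z - ↑i)|) ≤ K0)
    (hsum : ∀ z : ℝ, Summable fun i : ℤ => |χ (z - ↑i)|)
    {α : ℝ} (hα : 0 < α)
    {g : ℝ → ℝ} (hgCont : Continuous g) (hgSupp : HasCompactSupport g)
    {G : ℝ} (hG : ∀ x, |g x| ≤ G)
    (M : ℝ) (hM : 1 ≤ M)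
    {ε : ℝ} (hε : 0 < ε) :
    ∃ W : ℝ, 1 ≤ W ∧ ∀ w, W ≤ w → ∀ y, |y| ≤ 3 * M →
      |T χ α w g y - g y| ≤ ε := by
  have hG0 : 0 ≤ G := le_trans (abs_nonneg _) (hG 0)
  have hK00 : 0 ≤ K0 := le_trans (tsum_nonneg fun i => abs_nonneg _) (hK0 0)
  set ε₁ : ℝ := ε / (2 * (K0 + 1)) with hε₁def
  have hε₁ : 0 < ε₁ := by positivity
  obtain ⟨δ, hδ, hUC⟩ := Metric.uniformContinuous_iff.1
    (hgSupp.uniformContinuous_of_continuous hgCont) ε₁ hε₁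
  set A : ℝ := 4 * (G + 1) * (mb + 1) / ε with hAdef
  have hA : 0 < A := by positivity
  refine ⟨max 1 (max (4 * (1 + 3 * M) / δ) (4 / δ * A ^ β⁻¹)), le_max_left _ _, ?_⟩
  intro w hw y hy
  have hw1 : (1:ℝ) ≤ w := le_trans (le_max_left _ _) hw
  have hw0 : (0:ℝ) < w := lt_of_lt_of_le one_pos hw1
  have hwA : 4 * (1 + 3 * M) / δ ≤ w := le_trans (le_trans (le_max_left _ _) (le_max_right _ _)) hw
  have hwB : 4 / δ * A ^ β⁻¹ ≤ w := le_trans (le_trans (le_max_right _ _) (le_max_right _ _)) hw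
  set z : ℝ := w * y with hzdef
  set c : ℝ := δ * w / 4 with hcdef
  have hc : 0 < c := by positivity
  have hcp : (0:ℝ) < c ^ β := Real.rpow_pos_of_pos hc β
  set I : ℤ → ℝ := fun i => ∫ t in (0:ℝ)..1, g ((↑i + t ^ α) / (w + 1)) with hIdef
  have hIbd : ∀ i : ℤ, |I i| ≤ G := by
    intro i
    have := intervalIntegral.norm_integral_le_of_norm_le_const
      (a := (0:ℝ)) (b := 1) (C := G) (f := fun t => g ((↑i + t ^ α) / (w + 1)))
      (fun x _ => hG _)
    simpa using this
  have hyabs : |y| ≤ 3 * M := hy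
  -- near estimate
  have hInear : ∀ i : ℤ, |z - ↑i| ≤ c → |I i - g y| ≤ ε₁ := by
    intro i hic
    have hint : IntervalIntegrable (fun t => g ((↑i + t ^ α) / (w + 1))) volume 0 1 :=
      (cont_integrand hgCont hα _ _).intervalIntegrable 0 1
    have hconst : IntervalIntegrable (fun _ : ℝ => g y) volume 0 1 :=
      (continuous_const).intervalIntegrable 0 1
    have heq : I i - g y = ∫ t in (0:ℝ)..1, (g ((↑i + t ^ α) / (w + 1)) - g y) := by
      rw [intervalIntegral.integral_sub hint hconst, intervalIntegral.integral_const]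
      simp [hIdef]
    have hbd : ∀ t ∈ Set.uIoc (0:ℝ) 1, ‖g ((↑i + t ^ α) / (w + 1)) - g y‖ ≤ ε₁ := by
      intro t ht
      rw [Set.uIoc_of_le (by norm_num : (0:ℝ) ≤ 1)] at ht
      obtain ⟨htα0, htα1⟩ := rpow_mem ht hα
      have hargeq : (↑i + t ^ α) / (w + 1) - y = ((↑i - w * y) + (t ^ α - y)) / (w + 1) := by
        field_simp
        ring
      have hnum : |(↑i - w * y) + (t ^ α - y)| ≤ c + (1 + 3 * M) := by
        have h1 : |(↑i - w * y : ℝ)| ≤ c := by rwa [← abs_neg, neg_sub]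
        have h2 : |t ^ α - y| ≤ 1 + 3 * M := by
          have := abs_sub (t ^ α) y
          have hta : |t ^ α| ≤ 1 := abs_le.2 ⟨by linarith, htα1⟩
          calc |t ^ α - y| ≤ |t ^ α| + |y| := abs_sub _ _
            _ ≤ 1 + 3 * M := add_le_add hta hyabs
        calc |(↑i - w * y) + (t ^ α - y)| ≤ |(↑i - w * y : ℝ)| + |t ^ α - y| := abs_add_le _ _
          _ ≤ c + (1 + 3 * M) := add_le_add h1 h2
      have hdelta : (c + (1 + 3 * M)) / (w + 1) < δ := by
        rw [div_lt_iff₀ (by linarith : (0:ℝ) < w + 1)]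
        have hδw : 4 * (1 + 3 * M) ≤ δ * w := by
          rw [div_le_iff₀ hδ] at hwA
          linarith [hwA]
        rw [hcdef]
        nlinarith [hδ, hM, hw1]
      have hdist : dist ((↑i + t ^ α) / (w + 1)) y < δ := by
        rw [Real.dist_eq, hargeq, abs_div, abs_of_pos (by linarith : (0:ℝ) < w + 1)]
        calc |(↑i - w * y) + (t ^ α - y)| / (w + 1)
            ≤ (c + (1 + 3 * M)) / (w + 1) :=
              div_le_div_of_nonneg_right hnum (by linarith) |>.trans_eq rfl
          _ < δ := hdelta
      have := hUC hdist
      rw [Real.dist_eq] at this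
      rw [Real.norm_eq_abs]
      exact this.le
    rw [heq]
    have := intervalIntegral.norm_integral_le_of_norm_le_const hbd
    simpa using this
  have hIfar : ∀ i : ℤ, |I i - g y| ≤ 2 * G := by
    intro i
    calc |I i - g y| ≤ |I i| + |g y| := abs_sub _ _
      _ ≤ 2 * G := by linarith [hIbd i, hG y]
  -- summability
  have hS1abs : Summable fun i : ℤ => |χ (z - ↑i) * I i| := by
    refine Summable.of_nonneg_of_le (fun i => abs_nonneg _) (fun i => ?_) ((hsum z).mul_right G)
    rw [abs_mul]
    exact mul_le_mul_of_nonneg_left (hIbd i) (abs_nonneg _)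
  have hS1 : Summable fun i : ℤ => χ (z - ↑i) * I i := Summable.of_abs hS1abs
  have hχs : Summable fun i : ℤ => χ (z - ↑i) := Summable.of_abs (hsum z)
  have hS2 : Summable fun i : ℤ => χ (z - ↑i) * g y := hχs.mul_right (g y)
  have hgyeq : g y = ∑' i : ℤ, χ (z - ↑i) * g y := by
    rw [tsum_mul_right, hχsum z, one_mul]
  have hdiff : T χ α w g y - g y = ∑' i : ℤ, χ (z - ↑i) * (I i - g y) := by
    have hT : T χ α w g y = ∑' i : ℤ, χ (z - ↑i) * I i := rfl
    rw [hT]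
    nth_rewrite 1 [hgyeq]
    rw [← Summable.tsum_sub hS1 hS2]
    congr 1
    funext i
    ring
  have hnormsum : Summable fun i : ℤ => ‖χ (z - ↑i) * (I i - g y)‖ := by
    refine Summable.of_nonneg_of_le (fun i => norm_nonneg _) (fun i => ?_)
      ((hsum z).mul_right (2 * G))
    rw [Real.norm_eq_abs, abs_mul]
    exact mul_le_mul_of_nonneg_left (hIfar i) (abs_nonneg _)
  have hTbd : |T χ α w g y - g y| ≤ ∑' i : ℤ, ‖χ (z - ↑i) * (I i - g y)‖ := by
    rw [hdiff, ← Real.norm_eq_abs]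
    exact norm_tsum_le_tsum_norm hnormsum
  -- per-term bound
  have hterm : ∀ i : ℤ, ‖χ (z - ↑i) * (I i - g y)‖ ≤
      ε₁ * |χ (z - ↑i)| + (2 * G / c ^ β) * (|χ (z - ↑i)| * |z - ↑i| ^ β) := by
    intro i
    rw [Real.norm_eq_abs, abs_mul]
    by_cases h : |z - ↑i| ≤ c
    · have h1 : |χ (z - ↑i)| * |I i - g y| ≤ ε₁ * |χ (z - ↑i)| := by
        rw [mul_comm]
        exact mul_le_mul_of_nonneg_right (hInear i h) (abs_nonneg _)
      have h2 : (0:ℝ) ≤ (2 * G / c ^ β) * (|χ (z - ↑i)| * |z - ↑i| ^ β) := by positivity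
      linarith
    · push_neg at h
      have hrp : c ^ β ≤ |z - ↑i| ^ β := Real.rpow_le_rpow hc.le h.le hβ.le
      have hq : (1:ℝ) ≤ |z - ↑i| ^ β / c ^ β := (one_le_div hcp).2 hrp
      have heq2 : (2 * G / c ^ β) * (|χ (z - ↑i)| * |z - ↑i| ^ β)
          = 2 * G * |χ (z - ↑i)| * (|z - ↑i| ^ β / c ^ β) := by ring
      rw [heq2]
      have h1 : |χ (z - ↑i)| * |I i - g y| ≤ 2 * G * |χ (z - ↑i)| := by
        rw [mul_comm]
        exact mul_le_mul_of_nonneg_right (hIfar i) (abs_nonneg _)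
      have h2 : 2 * G * |χ (z - ↑i)| ≤ 2 * G * |χ (z - ↑i)| * (|z - ↑i| ^ β / c ^ β) := by
        nth_rewrite 1 [← mul_one (2 * G * |χ (z - ↑i)|)]
        exact mul_le_mul_of_nonneg_left hq (by positivity)
      have h3 : (0:ℝ) ≤ ε₁ * |χ (z - ↑i)| := by positivity
      linarith
  have hsum_rhs1 : Summable fun i : ℤ => ε₁ * |χ (z - ↑i)| := (hsum z).mul_left ε₁
  have hsum_rhs2 : Summable fun i : ℤ => (2 * G / c ^ β) * (|χ (z - ↑i)| * |z - ↑i| ^ β) :=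
    (hβsumm z).mul_left _
  have htsum_le : (∑' i : ℤ, ‖χ (z - ↑i) * (I i - g y)‖) ≤
      ε₁ * K0 + (2 * G / c ^ β) * mb := by
    calc (∑' i : ℤ, ‖χ (z - ↑i) * (I i - g y)‖)
        ≤ ∑' i : ℤ, (ε₁ * |χ (z - ↑i)| + (2 * G / c ^ β) * (|χ (z - ↑i)| * |z - ↑i| ^ β)) :=
          Summable.tsum_le_tsum hterm hnormsum (hsum_rhs1.add hsum_rhs2)
      _ = ε₁ * (∑' i : ℤ, |χ (z - ↑i)|)
          + (2 * G / c ^ β) * (∑' i : ℤ, |χ (z - ↑i)| * |z - ↑i| ^ β) := by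
          rw [Summable.tsum_add hsum_rhs1 hsum_rhs2, tsum_mul_left, tsum_mul_left]
      _ ≤ ε₁ * K0 + (2 * G / c ^ β) * mb := by
          apply add_le_add
          · exact mul_le_mul_of_nonneg_left (hK0 z) hε₁.le
          · exact mul_le_mul_of_nonneg_left (hmb z) (by positivity)
  -- final numeric bounds
  have hfin1 : ε₁ * K0 ≤ ε / 2 := by
    rw [hε₁def, div_mul_eq_mul_div, div_le_div_iff₀ (by positivity) (by norm_num : (0:ℝ) < 2)]
    nlinarith
  have hAc : A ^ β⁻¹ ≤ c := by
    have h4 : 4 / δ * A ^ β⁻¹ * δ ≤ w * δ := mul_le_mul_of_nonneg_right hwB hδ.le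
    have h5 : 4 / δ * A ^ β⁻¹ * δ = 4 * A ^ β⁻¹ := by field_simp
    rw [h5, mul_comm w δ] at h4
    rw [hcdef]
    linarith
  have hAcβ : A ≤ c ^ β := by
    have := Real.rpow_le_rpow (Real.rpow_nonneg hA.le _) hAc hβ.le
    rwa [Real.rpow_inv_rpow hA.le hβ.ne'] at this
  have hfin2 : (2 * G / c ^ β) * mb ≤ ε / 2 := by
    have h1 : (2 * G / c ^ β) * mb = 2 * G * mb / c ^ β := by ring
    have h2 : 2 * G * mb / c ^ β ≤ 2 * G * mb / A :=
      div_le_div_of_nonneg_left (by positivity) hA hAcβ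
    have h3 : 2 * G * mb / A ≤ ε / 2 := by
      rw [div_le_iff₀ hA]
      have h4 : ε / 2 * A = 2 * (G + 1) * (mb + 1) := by
        rw [hAdef]
        field_simp
        ring
      rw [h4]
      nlinarith
    linarith
  linarith [hTbd, htsum_le, hfin1, hfin2]

private lemma tail_pointwise {χ : ℝ → ℝ}
    (hsum : ∀ z : ℝ, Summable fun i : ℤ => |χ (z - ↑i)|)
    {β : ℝ} (hβ : 0 < β)
    (hβsumm : ∀ z : ℝ, Summable fun i : ℤ => |χ (z - ↑i)| * |z - ↑i| ^ β)
    {mb : ℝ} (hmb0 : 0 ≤ mb) (hmb : ∀ z : ℝ, (∑' i : ℤ, |χ (z - ↑i)| * |z - ↑i| ^ β) ≤ mb)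
    {α : ℝ} (hα : 0 < α)
    {g : ℝ → ℝ} {G M : ℝ} (hG : ∀ x, |g x| ≤ G) (hM : 1 ≤ M)
    (hgzero : ∀ x : ℝ, M < |x| → g x = 0)
    {η : ℝ → ℝ} (hηconv : ConvexOn ℝ (Set.Ici 0) η) (hηmono : MonotoneOn η (Set.Ici 0))
    (hη0 : η 0 = 0)
    {l : ℝ} (hl : 0 < l)
    {w : ℝ} (hw2 : 2 ≤ w)
    (hQ : l * (G + 1) * (mb + 1) ≤ (M * w) ^ β)
    {y : ℝ} (hy : 3 * M < |y|) :
    η (l * |T χ α w g y - g y|) ≤ (l * (G + 1) * (η 1 + 1)) *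
      ∑' i : ℤ, (if |(i:ℝ)| ≤ M * (w + 1) + 1 then |χ (w * y - ↑i)| else 0) := by
  have hG0 : 0 ≤ G := le_trans (abs_nonneg _) (hG 0)
  have hw0 : (0:ℝ) < w := by linarith
  have hM0 : (0:ℝ) < M := by linarith
  have hMw : (0:ℝ) < M * w := by positivity
  have hMwβ : (0:ℝ) < (M * w) ^ β := Real.rpow_pos_of_pos hMw β
  set u : ℝ := (mb + 1) / (M * w) ^ β with hudef
  have hu : 0 < u := by positivity
  set h : ℤ → ℝ := fun i => if |(i:ℝ)| ≤ M * (w + 1) + 1 then |χ (w * y - ↑i)| else 0 with hhdef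
  have hh_le : ∀ i : ℤ, h i ≤ |χ (w * y - ↑i)| := by
    intro i
    simp only [hhdef]
    split <;> simp [abs_nonneg]
  have hh_nonneg : ∀ i : ℤ, 0 ≤ h i := by
    intro i
    simp only [hhdef]
    split <;> simp [abs_nonneg]
  have hsummh : Summable h := Summable.of_nonneg_of_le hh_nonneg hh_le (hsum (w * y))
  set Sg : ℝ := ∑' i : ℤ, h i with hSgdef
  have hSg0 : 0 ≤ Sg := tsum_nonneg hh_nonneg
  have hgy0 : g y = 0 := hgzero y (by nlinarith)
  -- vanishing of integrals for far i
  have hI0 : ∀ i : ℤ, M * (w + 1) + 1 < |(i:ℝ)| →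
      (∫ t in (0:ℝ)..1, g ((↑i + t ^ α) / (w + 1))) = 0 := by
    intro i hi
    have heqon : Set.EqOn (fun t : ℝ => g ((↑i + t ^ α) / (w + 1))) (fun _ => (0:ℝ))
        (Set.uIcc (0:ℝ) 1) := by
      intro t ht
      rw [Set.uIcc_of_le (by norm_num : (0:ℝ) ≤ 1)] at ht
      have ht0 : (0:ℝ) ≤ t := ht.1
      have htα0 : 0 ≤ t ^ α := Real.rpow_nonneg ht0 α
      have htα1 : t ^ α ≤ 1 := Real.rpow_le_one ht0 ht.2 hα.le
      have habs1 : |(i:ℝ)| ≤ |(↑i + t ^ α : ℝ)| + 1 := by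
        calc |(i:ℝ)| = |(↑i + t ^ α) - t ^ α| := by ring_nf
          _ ≤ |(↑i + t ^ α : ℝ)| + |t ^ α| := abs_sub _ _
          _ ≤ |(↑i + t ^ α : ℝ)| + 1 := by
              have : |t ^ α| ≤ 1 := abs_le.2 ⟨by linarith, htα1⟩
              linarith
      have harg : M < |(↑i + t ^ α) / (w + 1)| := by
        rw [abs_div, abs_of_pos (by linarith : (0:ℝ) < w + 1)]
        rw [lt_div_iff₀ (by linarith : (0:ℝ) < w + 1)]
        linarith
      exact hgzero _ harg
    rw [intervalIntegral.integral_congr heqon]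
    simp
  -- |T| ≤ (G+1) * Sg
  have hS1abs : Summable fun i : ℤ =>
      |χ (w * y - ↑i) * ∫ t in (0:ℝ)..1, g ((↑i + t ^ α) / (w + 1))| := by
    refine Summable.of_nonneg_of_le (fun i => abs_nonneg _) (fun i => ?_)
      ((hsum (w * y)).mul_right G)
    rw [abs_mul]
    refine mul_le_mul_of_nonneg_left ?_ (abs_nonneg _)
    have := intervalIntegral.norm_integral_le_of_norm_le_const
      (a := (0:ℝ)) (b := 1) (C := G) (f := fun t => g ((↑i + t ^ α) / (w + 1)))
      (fun x _ => hG _)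
    simpa using this
  have hTabs : |T χ α w g y| ≤ (G + 1) * Sg := by
    have h1 : |T χ α w g y| ≤ ∑' i : ℤ,
        |χ (w * y - ↑i) * ∫ t in (0:ℝ)..1, g ((↑i + t ^ α) / (w + 1))| := by
      have hnn : Summable fun i : ℤ =>
          ‖χ (w * y - ↑i) * ∫ t in (0:ℝ)..1, g ((↑i + t ^ α) / (w + 1))‖ := by
        simpa only [Real.norm_eq_abs] using hS1abs
      have h0 := norm_tsum_le_tsum_norm hnn
      simp only [Real.norm_eq_abs] at h0
      exact h0
    refine le_trans h1 ?_
    have h2 : ∀ i : ℤ, |χ (w * y - ↑i) * ∫ t in (0:ℝ)..1, g ((↑i + t ^ α) / (w + 1))|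
        ≤ (G + 1) * h i := by
      intro i
      by_cases hc : |(i:ℝ)| ≤ M * (w + 1) + 1
      · simp only [hhdef, if_pos hc]
        have hIb : |∫ t in (0:ℝ)..1, g ((↑i + t ^ α) / (w + 1))| ≤ G + 1 := by
          have := intervalIntegral.norm_integral_le_of_norm_le_const
            (a := (0:ℝ)) (b := 1) (C := G) (f := fun t => g ((↑i + t ^ α) / (w + 1)))
            (fun x _ => hG _)
          simp only [Real.norm_eq_abs] at this
          simp at this
          linarith
        rw [abs_mul]
        calc |χ (w * y - ↑i)| * |∫ t in (0:ℝ)..1, g ((↑i + t ^ α) / (w + 1))|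
            ≤ |χ (w * y - ↑i)| * (G + 1) := mul_le_mul_of_nonneg_left hIb (abs_nonneg _)
          _ = (G + 1) * |χ (w * y - ↑i)| := mul_comm _ _
      · push_neg at hc
        simp only [hhdef, if_neg (not_le.2 hc)]
        rw [hI0 i hc]
        simp
    calc (∑' i : ℤ, |χ (w * y - ↑i) * ∫ t in (0:ℝ)..1, g ((↑i + t ^ α) / (w + 1))|)
        ≤ ∑' i : ℤ, (G + 1) * h i := Summable.tsum_le_tsum h2 hS1abs (hsummh.mul_left _)
      _ = (G + 1) * Sg := tsum_mul_left
  -- Sg ≤ u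
  have hSgu : Sg ≤ u := by
    have h2 : ∀ i : ℤ, h i ≤ |χ (w * y - ↑i)| * |w * y - ↑i| ^ β / (M * w) ^ β := by
      intro i
      by_cases hc : |(i:ℝ)| ≤ M * (w + 1) + 1
      · have hfar : M * w ≤ |w * y - ↑i| := by
          have h3 : |w * y| - |(i:ℝ)| ≤ |w * y - ↑i| := by
            have := abs_sub_abs_le_abs_sub (w * y) ((i:ℝ))
            linarith
          have h4 : |w * y| = w * |y| := by rw [abs_mul, abs_of_pos hw0]
          nlinarith
        have hrp : (M * w) ^ β ≤ |w * y - ↑i| ^ β := Real.rpow_le_rpow hMw.le hfar hβ.le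
        simp only [hhdef, if_pos hc]
        rw [mul_div_assoc]
        nth_rewrite 1 [← mul_one (|χ (w * y - ↑i)|)]
        refine mul_le_mul_of_nonneg_left ?_ (abs_nonneg _)
        exact (one_le_div hMwβ).2 hrp
      · simp only [hhdef, if_neg hc]
        positivity
    calc Sg ≤ ∑' i : ℤ, |χ (w * y - ↑i)| * |w * y - ↑i| ^ β / (M * w) ^ β :=
          Summable.tsum_le_tsum h2 hsummh ((hβsumm (w * y)).div_const _)
      _ = (∑' i : ℤ, |χ (w * y - ↑i)| * |w * y - ↑i| ^ β) / (M * w) ^ β := tsum_div_const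
      _ ≤ mb / (M * w) ^ β := by gcongr; exact hmb (w * y)
      _ ≤ u := by
          rw [hudef]
          gcongr
          linarith
  -- convexity argument
  set X : ℝ := l * (G + 1) * u with hXdef
  have hX0 : 0 < X := by positivity
  have hX1 : X ≤ 1 := by
    rw [hXdef, hudef]
    rw [mul_div_assoc', div_le_one hMwβ]
    exact hQ
  set xv : ℝ := l * |T χ α w g y - g y| with hxdef
  have hx0 : 0 ≤ xv := by positivity
  have hxS : xv ≤ l * (G + 1) * Sg := by
    rw [hxdef, hgy0, sub_zero]
    calc l * |T χ α w g y| ≤ l * ((G + 1) * Sg) := by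
          exact mul_le_mul_of_nonneg_left hTabs hl.le
      _ = l * (G + 1) * Sg := by ring
  have hxX : xv ≤ X := by
    refine le_trans hxS ?_
    rw [hXdef]
    exact mul_le_mul_of_nonneg_left hSgu (by positivity)
  have hη1 : 0 ≤ η 1 := by
    have := hηmono (Set.mem_Ici.2 (le_refl (0:ℝ))) (Set.mem_Ici.2 (by norm_num : (0:ℝ) ≤ 1))
      (by norm_num : (0:ℝ) ≤ 1)
    rw [hη0] at this
    exact this
  have hηX0 : 0 ≤ η X := by
    have := hηmono (Set.mem_Ici.2 (le_refl (0:ℝ))) (Set.mem_Ici.2 hX0.le) hX0.le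
    rw [hη0] at this
    exact this
  have step1 : η xv ≤ xv / X * η X := eta_slope hηconv hη0 hx0 hxX hX0
  have step2 : xv / X * η X ≤ Sg / u * η X := by
    refine mul_le_mul_of_nonneg_right ?_ hηX0
    rw [div_le_div_iff₀ hX0 hu]
    calc xv * u ≤ (l * (G + 1) * Sg) * u := mul_le_mul_of_nonneg_right hxS hu.le
      _ = Sg * X := by rw [hXdef]; ring
  have step3 : η X ≤ X * (η 1 + 1) := by
    have h5 := eta_slope hηconv hη0 hX0.le hX1 one_pos
    calc η X ≤ X / 1 * η 1 := h5
      _ = X * η 1 := by ring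
      _ ≤ X * (η 1 + 1) := by nlinarith
  have step4 : Sg / u * η X ≤ Sg / u * (X * (η 1 + 1)) := by
    refine mul_le_mul_of_nonneg_left step3 (by positivity)
  have step5 : Sg / u * (X * (η 1 + 1)) = (l * (G + 1) * (η 1 + 1)) * Sg := by
    rw [hXdef]
    field_simp
  calc η xv ≤ xv / X * η X := step1
    _ ≤ Sg / u * η X := step2
    _ ≤ Sg / u * (X * (η 1 + 1)) := step4
    _ = (l * (G + 1) * (η 1 + 1)) * Sg := step5

set_option maxHeartbeats 1000000 in
theorem stmt6 (χ : ℝ → ℝ)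
    (hχInt : Integrable χ)
    (hχbd : ∃ d : ℝ, 0 < d ∧ ∃ C : ℝ, ∀ z ∈ Set.Icc (-d) d, |χ z| ≤ C)
    (hχsum : ∀ z : ℝ, ∑' i : ℤ, χ (z - ↑i) = 1)
    (β : ℝ) (hβ : 0 < β)
    (hβsumm : ∀ z : ℝ, Summable fun i : ℤ => |χ (z - ↑i)| * |z - ↑i| ^ β)
    (hβbdd : BddAbove (Set.range fun z : ℝ => ∑' i : ℤ, |χ (z - ↑i)| * |z - ↑i| ^ β))
    (α : ℝ) (hα : 0 < α)
    (η : ℝ → ℝ) (hηconv : ConvexOn ℝ (Set.Ici 0) η)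
    (hηmono : MonotoneOn η (Set.Ici 0)) (hη0 : η 0 = 0)
    (hηpos : ∀ x : ℝ, 0 < x → 0 < η x)
    (g : ℝ → ℝ) (hgCont : Continuous g) (hgSupp : HasCompactSupport g) :
    ∀ l : ℝ, 0 < l →
      Tendsto (fun w : ℝ => ∫⁻ y : ℝ, ENNReal.ofReal (η (l * |T χ α w g y - g y|)))
        atTop (nhds 0) := by
  intro l hl
  obtain ⟨d, hd, C, hC⟩ := hχbd
  set mb : ℝ := ⨆ z : ℝ, ∑' i : ℤ, |χ (z - ↑i)| * |z - ↑i| ^ β with hmbdef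
  have hmb : ∀ z : ℝ, (∑' i : ℤ, |χ (z - ↑i)| * |z - ↑i| ^ β) ≤ mb :=
    fun z => le_ciSup hβbdd z
  have hmb0 : 0 ≤ mb := le_trans (tsum_nonneg fun i => by positivity) (hmb 0)
  have hsum : ∀ z : ℝ, Summable fun i : ℤ => |χ (z - ↑i)| :=
    summable_abs_chi hd hC hβ hβsumm
  have hK0 : ∀ z : ℝ, (∑' i : ℤ, |χ (z - ↑i)|) ≤ C * (2 * d + 2) + mb / d ^ β :=
    tsum_abs_chi_le hd hC hβ hβsumm hmb
  -- sup of |g|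
  obtain ⟨x₀, hG⟩ := (hgCont.abs).exists_forall_ge_of_hasCompactSupport hgSupp.abs
  set G : ℝ := |g x₀| with hGdef
  have hG0 : 0 ≤ G := abs_nonneg _
  -- support bound
  obtain ⟨M₀, hM₀⟩ := (hgSupp.isBounded).subset_closedBall 0
  set M : ℝ := max M₀ 1 with hMdef
  have hM : 1 ≤ M := le_max_right _ _
  have hM0 : (0:ℝ) < M := lt_of_lt_of_le one_pos hM
  have hgzero : ∀ x : ℝ, M < |x| → g x = 0 := by
    intro x hx
    apply image_eq_zero_of_notMem_tsupport
    intro hmem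
    have h1 := hM₀ hmem
    rw [Metric.mem_closedBall, Real.dist_eq, sub_zero] at h1
    have h2 : M₀ ≤ M := le_max_left _ _
    linarith
  have hη1 : 0 ≤ η 1 := by
    have := hηmono (Set.mem_Ici.2 (le_refl (0:ℝ))) (Set.mem_Ici.2 (by norm_num : (0:ℝ) ≤ 1))
      (by norm_num : (0:ℝ) ≤ 1)
    rw [hη0] at this
    exact this
  set c₂ : ℝ := l * (G + 1) * (η 1 + 1) with hc₂def
  have hc₂ : 0 ≤ c₂ := by positivity
  set Q : ℝ := l * (G + 1) * (mb + 1) with hQdef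
  have hQpos : 0 < Q := by positivity
  rw [ENNReal.tendsto_nhds_zero]
  intro ε hε
  obtain ⟨r, hr, hrε⟩ : ∃ r : ℝ, 0 < r ∧ ENNReal.ofReal r ≤ ε := by
    rcases le_or_gt 1 ε with h | h
    · exact ⟨1, one_pos, by simpa using h⟩
    · have hεtop : ε ≠ ⊤ := (h.trans_le le_top).ne
      exact ⟨ε.toReal, ENNReal.toReal_pos hε.ne' hεtop,
        le_of_eq (ENNReal.ofReal_toReal hεtop)⟩
  set εA : ℝ := min (1 / (2 * l)) (r / (12 * M * l * (η 1 + 1))) with hεAdef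
  have hεA : 0 < εA := lt_min (by positivity) (by positivity)
  obtain ⟨WA, hWA1, hWA⟩ := unif_conv hχsum hβ hβsumm hmb0 hmb hK0 hsum hα hgCont hgSupp
    hG M hM hεA
  set εB : ℝ := r / (2 * (3 * M * c₂ + 1)) with hεBdef
  have hεB : 0 < εB := by positivity
  obtain ⟨n, hn⟩ := tau_small hχInt (ENNReal.ofReal εB) (ENNReal.ofReal_pos.2 hεB)
  set WQ : ℝ := Q ^ β⁻¹ with hWQdef
  filter_upwards [eventually_ge_atTop (max (max WA 7) (max ((n:ℝ)) WQ))] with w hwall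
  have hwWA : WA ≤ w := le_trans (le_trans (le_max_left _ _) (le_max_left _ _)) hwall
  have hw7 : (7:ℝ) ≤ w := le_trans (le_trans (le_max_right _ _) (le_max_left _ _)) hwall
  have hwn : ((n:ℕ):ℝ) ≤ w := le_trans (le_trans (le_max_left _ _) (le_max_right _ _)) hwall
  have hwQ : WQ ≤ w := le_trans (le_trans (le_max_right _ _) (le_max_right _ _)) hwall
  have hw0 : (0:ℝ) < w := by linarith
  have hw2 : (2:ℝ) ≤ w := by linarith
  have hwM : w ≤ M * w := by nlinarith
  have hQc : Q ≤ (M * w) ^ β := by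
    have h1 : WQ ≤ M * w := le_trans hwQ hwM
    have h2 := Real.rpow_le_rpow (Real.rpow_nonneg hQpos.le _) h1 hβ.le
    rwa [Real.rpow_inv_rpow hQpos.le hβ.ne'] at h2
  set S : Set ℝ := Set.Icc (-(3*M)) (3*M) with hSdef
  have hSmeas : MeasurableSet S := measurableSet_Icc
  have hsplit := (lintegral_add_compl (μ := volume)
    (fun y => ENNReal.ofReal (η (l * |T χ α w g y - g y|))) hSmeas).symm
  -- Part A
  have hηεA : η (l * εA) * (6 * M) ≤ r / 2 := by
    have hl1 : l * εA ≤ 1 / 2 := by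
      have : εA ≤ 1 / (2 * l) := min_le_left _ _
      calc l * εA ≤ l * (1 / (2 * l)) := mul_le_mul_of_nonneg_left this hl.le
        _ = 1 / 2 := by field_simp
    have hslope : η (l * εA) ≤ (l * εA) * (η 1 + 1) := by
      have h5 := eta_slope hηconv hη0 (by positivity : (0:ℝ) ≤ l * εA)
        (by linarith) one_pos
      calc η (l * εA) ≤ (l * εA) / 1 * η 1 := h5
        _ = (l * εA) * η 1 := by ring
        _ ≤ (l * εA) * (η 1 + 1) := by nlinarith [hεA, hl]
    have hεA2 : εA ≤ r / (12 * M * l * (η 1 + 1)) := min_le_right _ _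
    have hkey : (l * εA) * (η 1 + 1) * (6 * M) ≤ r / 2 := by
      have h6 : l * εA * (η 1 + 1) * (6 * M)
          ≤ l * (r / (12 * M * l * (η 1 + 1))) * (η 1 + 1) * (6 * M) := by
        have h8 := mul_le_mul_of_nonneg_left hεA2 hl.le
        have h9 : (0:ℝ) ≤ (η 1 + 1) * (6 * M) := by positivity
        calc l * εA * (η 1 + 1) * (6 * M) = (l * εA) * ((η 1 + 1) * (6 * M)) := by ring
          _ ≤ (l * (r / (12 * M * l * (η 1 + 1)))) * ((η 1 + 1) * (6 * M)) :=
              mul_le_mul_of_nonneg_right h8 h9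
          _ = l * (r / (12 * M * l * (η 1 + 1))) * (η 1 + 1) * (6 * M) := by ring
      have h7 : l * (r / (12 * M * l * (η 1 + 1))) * (η 1 + 1) * (6 * M) = r / 2 := by
        field_simp
        ring
      linarith
    nlinarith [hslope, hkey, hM0, hη1, hεA, hl]
  have hA : (∫⁻ y in S, ENNReal.ofReal (η (l * |T χ α w g y - g y|)))
      ≤ ENNReal.ofReal (r / 2) := by
    have hbd : ∀ y ∈ S, ENNReal.ofReal (η (l * |T χ α w g y - g y|))
        ≤ ENNReal.ofReal (η (l * εA)) := by
      intro y hy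
      apply ENNReal.ofReal_le_ofReal
      have hyb : |y| ≤ 3 * M := by
        rw [hSdef, Set.mem_Icc] at hy
        rw [abs_le]
        exact ⟨by linarith [hy.1], hy.2⟩
      have hunif := hWA w hwWA y hyb
      exact hηmono (Set.mem_Ici.2 (by positivity)) (Set.mem_Ici.2 (by positivity))
        (mul_le_mul_of_nonneg_left hunif hl.le)
    calc (∫⁻ y in S, ENNReal.ofReal (η (l * |T χ α w g y - g y|)))
        ≤ ∫⁻ _ in S, ENNReal.ofReal (η (l * εA)) :=
          lintegral_mono_ae ((ae_restrict_mem hSmeas).mono hbd)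
      _ = ENNReal.ofReal (η (l * εA)) * volume S := setLIntegral_const _ _
      _ ≤ ENNReal.ofReal (η (l * εA)) * ENNReal.ofReal (6 * M) := by
          apply mul_le_mul_right
          rw [hSdef, Real.volume_Icc]
          apply ENNReal.ofReal_le_ofReal
          linarith
      _ = ENNReal.ofReal (η (l * εA) * (6 * M)) := by
          have hnn : 0 ≤ η (l * εA) := by
            have := hηmono (Set.mem_Ici.2 (le_refl (0:ℝ)))
              (Set.mem_Ici.2 (by positivity : (0:ℝ) ≤ l * εA)) (by positivity)
            rw [hη0] at this
            exact this
          rw [← ENNReal.ofReal_mul hnn]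
      _ ≤ ENNReal.ofReal (r / 2) := ENNReal.ofReal_le_ofReal hηεA
  -- Part B
  have hB : (∫⁻ y in Sᶜ, ENNReal.ofReal (η (l * |T χ α w g y - g y|)))
      ≤ ENNReal.ofReal (r / 2) := by
    have hpt : ∀ y ∈ Sᶜ, ENNReal.ofReal (η (l * |T χ α w g y - g y|))
        ≤ ENNReal.ofReal (c₂ *
          ∑' i : ℤ, (if |(i:ℝ)| ≤ M * (w + 1) + 1 then |χ (w * y - ↑i)| else 0)) := by
      intro y hy
      apply ENNReal.ofReal_le_ofReal
      have hy3 : 3 * M < |y| := not_mem_Icc_3M hM0 hy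
      have := tail_pointwise hsum hβ hβsumm hmb0 hmb hα hG hM hgzero hηconv hηmono hη0
        hl hw2 hQc hy3
      rw [hc₂def]
      exact this
    have hnMw : tau χ (M * w) ≤ ENNReal.ofReal εB := by
      refine le_trans (tau_anti ?_) hn
      calc ((n:ℕ):ℝ) ≤ w := hwn
        _ ≤ M * w := hwM
    have hBfin : 3 * M * c₂ * εB ≤ r / 2 := by
      rw [hεBdef]
      set a : ℝ := 3 * M * c₂ with hadef
      have ha : 0 ≤ a := by positivity
      rw [← mul_div_assoc, div_le_div_iff₀ (by positivity) (by norm_num : (0:ℝ) < 2)]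
      nlinarith [hr, ha]
    calc (∫⁻ y in Sᶜ, ENNReal.ofReal (η (l * |T χ α w g y - g y|)))
        ≤ ∫⁻ y in Sᶜ, ENNReal.ofReal (c₂ *
            ∑' i : ℤ, (if |(i:ℝ)| ≤ M * (w + 1) + 1 then |χ (w * y - ↑i)| else 0)) :=
          lintegral_mono_ae ((ae_restrict_mem hSmeas.compl).mono hpt)
      _ ≤ ENNReal.ofReal (3 * M * c₂) * tau χ (M * w) :=
          tail_integral hχInt hsum hM hc₂ hw7
      _ ≤ ENNReal.ofReal (3 * M * c₂) * ENNReal.ofReal εB := mul_le_mul_right hnMw _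
      _ = ENNReal.ofReal (3 * M * c₂ * εB) := (ENNReal.ofReal_mul (by positivity)).symm
      _ ≤ ENNReal.ofReal (r / 2) := ENNReal.ofReal_le_ofReal hBfin
  calc (∫⁻ y : ℝ, ENNReal.ofReal (η (l * |T χ α w g y - g y|)))
      = (∫⁻ y in S, ENNReal.ofReal (η (l * |T χ α w g y - g y|)))
        + ∫⁻ y in Sᶜ, ENNReal.ofReal (η (l * |T χ α w g y - g y|)) := hsplit
    _ ≤ ENNReal.ofReal (r / 2) + ENNReal.ofReal (r / 2) := add_le_add hA hB
    _ = ENNReal.ofReal r := by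
        rw [← ENNReal.ofReal_add (by positivity) (by positivity)]
        norm_num
    _ ≤ ε := hrε
end

section
/- For the Fejér kernel F(y) := (1/2) · sinc²(y/2), where sinc(y) := sin(πy)/(πy) for y ≠ 0 and sinc(0) := 1, and for every 0 < β < 1, the discrete absolute moment of order β is finite: m_β(F) := sup_{z∈ℝ} ∑_{i∈ℤ} |F(z − i)| · |z − i|^β < ∞. -/
set_option maxHeartbeats 1000000


open Real Filter MeasureTheory

/-- `sinc y = sin(πy)/(πy)` for `y ≠ 0`, and `sinc 0 = 1`. -/
noncomputable def sinc (y : ℝ) : ℝ :=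
  if y = 0 then 1 else Real.sin (Real.pi * y) / (Real.pi * y)

/-- The Fejér kernel `F(y) = (1/2) sinc²(y/2)`. -/
noncomputable def fejer (y : ℝ) : ℝ := (1 / 2) * (_root_.sinc (y / 2)) ^ 2

lemma sinc_sq_le_one (x : ℝ) : (_root_.sinc x) ^ 2 ≤ 1 := by
  unfold _root_.sinc
  split
  · norm_num
  · rename_i h
    have hne : Real.pi * x ≠ 0 := mul_ne_zero Real.pi_ne_zero h
    have hpos : 0 < (Real.pi * x) ^ 2 :=
      lt_of_le_of_ne (sq_nonneg _) (Ne.symm (pow_ne_zero 2 hne))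
    rw [div_pow, div_le_one hpos]
    calc Real.sin (Real.pi * x) ^ 2 = |Real.sin (Real.pi * x)| ^ 2 := (sq_abs _).symm
      _ ≤ |Real.pi * x| ^ 2 := pow_le_pow_left₀ (abs_nonneg _) Real.abs_sin_le_abs 2
      _ = (Real.pi * x) ^ 2 := sq_abs _

lemma fejer_nonneg (y : ℝ) : 0 ≤ fejer y := by unfold fejer; positivity

lemma fejer_le_half (y : ℝ) : fejer y ≤ 1 / 2 := by
  unfold fejer
  nlinarith [sinc_sq_le_one (y / 2)]

lemma fejer_le_inv_sq {y : ℝ} (hy : y ≠ 0) : fejer y ≤ 1 / y ^ 2 := by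
  unfold fejer _root_.sinc
  rw [if_neg (by simpa using hy)]
  have hy2 : (0:ℝ) < y ^ 2 := lt_of_le_of_ne (sq_nonneg _) (Ne.symm (pow_ne_zero 2 hy))
  have hsin : Real.sin (Real.pi * (y / 2)) ^ 2 ≤ 1 := by
    rw [← sq_abs]
    exact pow_le_one₀ (abs_nonneg _) (Real.abs_sin_le_one _)
  have hpi : (3:ℝ) < Real.pi := Real.pi_gt_three
  rw [div_pow]
  have hden : (Real.pi * (y / 2)) ^ 2 = Real.pi ^ 2 * y ^ 2 / 4 := by ring
  rw [hden]
  have hd : (0:ℝ) < Real.pi ^ 2 * y ^ 2 / 4 := by positivity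
  calc (1:ℝ)/2 * (Real.sin (Real.pi * (y/2)) ^ 2 / (Real.pi ^ 2 * y ^ 2 / 4))
      ≤ (1:ℝ)/2 * (1 / (Real.pi ^ 2 * y ^ 2 / 4)) := by gcongr
    _ = 2 / (Real.pi ^ 2 * y ^ 2) := by
        field_simp
        ring
    _ ≤ 1 / y ^ 2 := by
        rw [div_le_div_iff₀ (by positivity) hy2]
        have hpi2 : (9:ℝ) < Real.pi ^ 2 := by nlinarith
        nlinarith [mul_le_mul_of_nonneg_right hpi2.le (sq_nonneg y)]

/-- pointwise bound for a single term -/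
lemma term_le (β : ℝ) (hβ0 : 0 < β) (hβ1 : β < 1) (y : ℝ) :
    |fejer y| * |y| ^ β ≤ if |y| ≤ 1 then 1 else |y| ^ (β - 2) := by
  rw [abs_of_nonneg (fejer_nonneg y)]
  split
  · rename_i h
    calc fejer y * |y| ^ β ≤ (1/2) * 1 := by
          apply mul_le_mul (fejer_le_half y) ?_ (Real.rpow_nonneg (abs_nonneg _) _) (by norm_num)
          exact Real.rpow_le_one (abs_nonneg _) h (by linarith)
      _ ≤ 1 := by norm_num
  · rename_i h
    push_neg at h
    have hy0 : y ≠ 0 := by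
      intro h0; rw [h0] at h; simp at h; linarith
    have habs : (0:ℝ) < |y| := abs_pos.mpr hy0
    calc fejer y * |y| ^ β ≤ (1 / y ^ 2) * |y| ^ β := by
          apply mul_le_mul_of_nonneg_right (fejer_le_inv_sq hy0) (Real.rpow_nonneg (abs_nonneg _) _)
      _ = |y| ^ (-2 : ℝ) * |y| ^ β := by
          congr 1
          rw [Real.rpow_neg (abs_nonneg _), show ((2:ℝ)) = ((2:ℕ):ℝ) by norm_num,
            Real.rpow_natCast, sq_abs, one_div]
      _ = |y| ^ (β - 2) := by
          rw [← Real.rpow_add habs]; ring_nf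

/-- the dominating summable function -/
noncomputable def domf (β : ℝ) (k : ℤ) : ℝ :=
  4 * |(k : ℝ)| ^ (β - 2) + (if k = 0 ∨ k = 1 ∨ k = -1 then 1 else 0)

lemma domf_summable (β : ℝ) (hβ1 : β < 1) : Summable (domf β) := by
  apply Summable.add
  · have h : (1:ℝ) < 2 - β := by linarith
    have := (Real.summable_abs_int_rpow h).mul_left 4
    convert this using 2 with k
    · rfl
    ring_nf
  · apply summable_of_ne_finset_zero (s := {0, 1, -1})
    intro k hk
    simp only [Finset.mem_insert, Finset.mem_singleton] at hk
    push_neg at hk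
    simp [hk.1, hk.2.1, hk.2.2]

lemma domf_nonneg (β : ℝ) (k : ℤ) : 0 ≤ domf β k := by
  unfold domf
  have : (0:ℝ) ≤ |(k:ℝ)| ^ (β - 2) := Real.rpow_nonneg (abs_nonneg _) _
  split <;> nlinarith

/-- the key comparison: each term is at most `domf β (i - ⌊z⌋)` -/
lemma term_le_domf (β : ℝ) (hβ0 : 0 < β) (hβ1 : β < 1) (z : ℝ) (i : ℤ) :
    |fejer (z - ↑i)| * |z - ↑i| ^ β ≤ domf β (i - ⌊z⌋) := by
  set n := ⌊z⌋ with hn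
  have hf0 : (0:ℝ) ≤ z - n := by simpa [hn] using Int.floor_le z
  have hf1 : z - n < 1 := by
    have := Int.lt_floor_add_one z
    rw [hn]; linarith
  clear_value n
  have hbase := term_le β hβ0 hβ1 (z - i)
  by_cases hk : i - n = 0 ∨ i - n = 1 ∨ i - n = -1
  · -- near case: term ≤ 1 ≤ domf
    have h1 : |fejer (z - ↑i)| * |z - ↑i| ^ β ≤ 1 := by
      refine hbase.trans ?_
      split
      · exact le_rfl
      · rename_i h
        push_neg at h
        exact Real.rpow_le_one_of_one_le_of_nonpos h.le (by linarith)
    refine h1.trans ?_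
    unfold domf
    rw [if_pos hk]
    have : (0:ℝ) ≤ 4 * |((i - n : ℤ) : ℝ)| ^ (β - 2) := by positivity
    linarith
  · -- far case
    have hkneg := hk
    push_neg at hkneg
    have hk2 : 2 ≤ |i - n| := le_abs.mpr (by omega)
    have hk2' : (2:ℝ) ≤ |((i - n : ℤ) : ℝ)| := by
      rw [← Int.cast_abs]; exact_mod_cast hk2
    set K : ℝ := |((i - n : ℤ) : ℝ)| with hK
    have hzi : K - 1 < |z - i| := by
      have : |((i - n : ℤ) : ℝ)| = |(i:ℝ) - n| := by push_cast; ring_nf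
      rw [hK, this]
      have h1 : |(i:ℝ) - n| ≤ |(i:ℝ) - z| + |z - n| := by
        calc |(i:ℝ) - n| = |((i:ℝ) - z) + (z - n)| := by congr 1; ring
          _ ≤ |(i:ℝ) - z| + |z - n| := abs_add_le _ _
      have h2 : |z - (n:ℝ)| < 1 := by rw [abs_of_nonneg hf0]; linarith
      have h3 : |(i:ℝ) - z| = |z - i| := abs_sub_comm _ _
      rw [h3] at h1
      linarith
    have hhalf : K / 2 ≤ |z - i| := by linarith
    have hgt1 : 1 < |z - i| := by linarith
    have hle : |fejer (z - ↑i)| * |z - ↑i| ^ β ≤ |z - ↑i| ^ (β - 2) := by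
      refine hbase.trans_eq ?_
      rw [if_neg (not_le.mpr hgt1)]
    refine hle.trans ?_
    have hKpos : (0:ℝ) < K / 2 := by linarith
    have step1 : |z - ↑i| ^ (β - 2) ≤ (K / 2) ^ (β - 2) :=
      Real.rpow_le_rpow_of_nonpos hKpos hhalf (by linarith)
    have step2 : (K / 2) ^ (β - 2) = K ^ (β - 2) * (2:ℝ) ^ (2 - β) := by
      rw [Real.div_rpow (by linarith) (by norm_num)]
      rw [div_eq_mul_inv, ← Real.rpow_neg (by norm_num : (0:ℝ) ≤ 2), neg_sub]
    have step3 : (2:ℝ) ^ (2 - β) ≤ 4 := by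
      have : (2:ℝ) ^ (2 - β) ≤ (2:ℝ) ^ (2:ℝ) :=
        Real.rpow_le_rpow_of_exponent_le (by norm_num) (by linarith)
      have h4 : (2:ℝ) ^ (2:ℝ) = 4 := by
        rw [show ((2:ℝ)) = ((2:ℕ):ℝ) by norm_num, Real.rpow_natCast]; norm_num
      linarith [this, h4.le]
    have hKnn : (0:ℝ) ≤ K ^ (β - 2) := Real.rpow_nonneg (by linarith) _
    calc |z - ↑i| ^ (β - 2) ≤ K ^ (β - 2) * (2:ℝ) ^ (2 - β) := by rw [← step2]; exact step1
      _ ≤ K ^ (β - 2) * 4 := mul_le_mul_of_nonneg_left step3 hKnn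
      _ ≤ domf β (i - n) := by
          unfold domf
          rw [if_neg hk, add_zero, hK]
          exact le_of_eq (mul_comm _ _)

theorem stmt15 (β : ℝ) (hβ0 : 0 < β) (hβ1 : β < 1) :
    (∀ z : ℝ, Summable fun i : ℤ => |fejer (z - ↑i)| * |z - ↑i| ^ β) ∧
    BddAbove (Set.range fun z : ℝ => ∑' i : ℤ, |fejer (z - ↑i)| * |z - ↑i| ^ β) := by
  have hds := domf_summable β hβ1
  have hsum : ∀ z : ℝ, Summable fun i : ℤ => domf β (i - ⌊z⌋) :=
    fun z => (Equiv.subRight (⌊z⌋ : ℤ)).summable_iff.mpr hds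
  have hS : ∀ z : ℝ, Summable fun i : ℤ => |fejer (z - ↑i)| * |z - ↑i| ^ β := by
    intro z
    apply Summable.of_nonneg_of_le
    · intro i; positivity
    · intro i; exact term_le_domf β hβ0 hβ1 z i
    · exact hsum z
  refine ⟨hS, ⟨∑' k : ℤ, domf β k, ?_⟩⟩
  rintro x ⟨z, rfl⟩
  calc ∑' i : ℤ, |fejer (z - ↑i)| * |z - ↑i| ^ β
      ≤ ∑' i : ℤ, domf β (i - ⌊z⌋) :=
        Summable.tsum_le_tsum (fun i => term_le_domf β hβ0 hβ1 z i) (hS z) (hsum z)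
    _ = ∑' k : ℤ, domf β k := (Equiv.subRight (⌊z⌋ : ℤ)).tsum_eq (domf β)
end

section
/- For the Fejér kernel F(y) := (1/2) · sinc²(y/2), where sinc(y) := sin(πy)/(πy) for y ≠ 0 and sinc(0) := 1, one has ∑_{i∈ℤ} F(z − i) = 1 for every z ∈ ℝ. -/
open Real Filter MeasureTheory

open Topology

lemma negonesq (m : ℤ) : ((-1:ℝ)^m)^2 = 1 := by
  rcases Int.even_or_odd m with h | h
  · rw [h.neg_one_zpow]; norm_num
  · rw [h.neg_one_zpow]; norm_num

lemma quarter {θ : ℝ} (h : Real.sin (2*θ) ≠ 0) :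
    (1/4)/Real.sin θ^2 + (1/4)/Real.cos θ^2 = 1/Real.sin (2*θ)^2 := by
  have h2 : Real.sin (2*θ) = 2*Real.sin θ*Real.cos θ := Real.sin_two_mul θ
  have hs : Real.sin θ ≠ 0 := fun h0 => h (by simp [h2, h0])
  have hc : Real.cos θ ≠ 0 := fun h0 => h (by simp [h2, h0])
  rw [h2]
  field_simp
  nlinarith [Real.sin_sq_add_cos_sq θ]

lemma sin_ne {x : ℝ} (hx : ∀ n : ℤ, x ≠ (n:ℝ)) (k : ℕ) (n : ℤ) :
    Real.sin (π*(x+n)/2^k) ≠ 0 := by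
  intro h
  rw [Real.sin_eq_zero_iff] at h
  obtain ⟨m, hm⟩ := h
  apply hx (m*2^k - n)
  have h2 : (0:ℝ) < 2^k := by positivity
  have : π * ((m:ℝ)*2^k) = π * (x + n) := by
    field_simp at hm; rw [hm]
  have h3 := mul_left_cancel₀ Real.pi_ne_zero this
  push_cast
  linarith

lemma sin_ne' {x : ℝ} (hx : ∀ n : ℤ, x ≠ (n:ℝ)) : Real.sin (π*x) ≠ 0 := by
  have := sin_ne hx 0 0
  simpa using this

lemma window {x : ℝ} (hx : ∀ n : ℤ, x ≠ (n:ℝ)) :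
    ∀ N : ℕ, ∑ n ∈ Finset.Ico (-(2^N:ℤ)) (2^N),
      ((1:ℝ)/4)^(N+1) / Real.sin (π*(x + n)/2^(N+1))^2 = 1 / Real.sin (π*x)^2 := by
  intro N
  induction N with
  | zero =>
      have hIco : Finset.Ico (-(2^0:ℤ)) (2^0) = {-1, 0} := rfl
      rw [hIco]
      rw [Finset.sum_insert (by decide), Finset.sum_singleton]
      have e1 : π*(x + ((-1:ℤ):ℝ))/2^1 = π*x/2 - π/2 := by push_cast; ring
      have e2 : π*(x + ((0:ℤ):ℝ))/2^1 = π*x/2 := by push_cast; ring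
      rw [e1, e2, Real.sin_sub_pi_div_two]
      have hq := quarter (θ := π*x/2) (by
        have : 2*(π*x/2) = π*x := by ring
        rw [this]; exact sin_ne' hx)
      have : 2*(π*x/2) = π*x := by ring
      rw [this] at hq
      rw [← hq]
      ring_nf
  | succ N ih =>
      set f : ℤ → ℝ := fun n => ((1:ℝ)/4)^(N+2) / Real.sin (π*(x + n)/2^(N+2))^2 with hf
      set g : ℤ → ℝ := fun n => ((1:ℝ)/4)^(N+2) / Real.cos (π*(x + n)/2^(N+2))^2 with hg
      have hpowZ : (2:ℤ)^(N+1) = 2*2^N := by ring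
      have h2N : (0:ℤ) < 2^N := pow_pos (by norm_num) N
      have e1 : Finset.Ico (-(2^(N+1):ℤ)) (-(2^N:ℤ)) ∪ Finset.Ico (-(2^N:ℤ)) ((2^N:ℤ))
          = Finset.Ico (-(2^(N+1):ℤ)) ((2^N:ℤ)) :=
        Finset.Ico_union_Ico_eq_Ico (by linarith) (by linarith)
      have e2 : Finset.Ico (-(2^(N+1):ℤ)) ((2^N:ℤ)) ∪ Finset.Ico ((2^N:ℤ)) ((2^(N+1):ℤ))
          = Finset.Ico (-(2^(N+1):ℤ)) ((2^(N+1):ℤ)) :=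
        Finset.Ico_union_Ico_eq_Ico (by linarith) (by linarith)
      have eA : (Finset.Ico (0:ℤ) (2^N)).map (addLeftEmbedding (-(2^(N+1))))
          = Finset.Ico (-(2^(N+1):ℤ)) (-(2^N:ℤ)) := by
        rw [Finset.map_add_left_Ico]; congr 1 <;> linarith
      have eC : (Finset.Ico (-(2^N:ℤ)) 0).map (addLeftEmbedding ((2^(N+1):ℤ)))
          = Finset.Ico ((2^N:ℤ)) ((2^(N+1):ℤ)) := by
        rw [Finset.map_add_left_Ico]; congr 1 <;> linarith
      have hpowR : (2:ℝ)^(N+2) = 2*2^(N+1) := by ring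
      have key_neg : ∀ n : ℤ, f (-(2^(N+1)) + n) = g n := by
        intro n
        have harg : π*(x + ((-(2^(N+1)) + n : ℤ):ℝ))/2^(N+2)
            = π*(x + n)/2^(N+2) - π/2 := by
          push_cast
          field_simp
          ring
        simp only [hf, hg, harg, Real.sin_sub_pi_div_two, neg_sq]
      have key_pos : ∀ n : ℤ, f ((2^(N+1)) + n) = g n := by
        intro n
        have harg : π*(x + (((2^(N+1)) + n : ℤ):ℝ))/2^(N+2)
            = π*(x + n)/2^(N+2) + π/2 := by
          push_cast
          field_simp
          ring
        simp only [hf, hg, harg, Real.sin_add_pi_div_two]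
      have eB : Finset.Ico (-(2^N:ℤ)) 0 ∪ Finset.Ico (0:ℤ) (2^N)
          = Finset.Ico (-(2^N:ℤ)) (2^N) :=
        Finset.Ico_union_Ico_eq_Ico (by linarith) (by linarith)
      have key : ∀ n : ℤ, f n + g n = ((1:ℝ)/4)^(N+1) / Real.sin (π*(x + n)/2^(N+1))^2 := by
        intro n
        have h2θ : 2*(π*(x+n)/2^(N+2)) = π*(x+n)/2^(N+1) := by
          field_simp
          ring
        have hq := quarter (θ := π*(x+n)/2^(N+2)) (by rw [h2θ]; exact sin_ne hx (N+1) n)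
        rw [h2θ] at hq
        simp only [hf, hg]
        rw [pow_succ ((1:ℝ)/4) (N+1)]
        calc (1/4)^(N+1) * (1/4) / Real.sin (π*(x+n)/2^(N+2))^2
              + (1/4)^(N+1) * (1/4) / Real.cos (π*(x+n)/2^(N+2))^2
            = (1/4)^(N+1) * ((1/4)/Real.sin (π*(x+n)/2^(N+2))^2
                + (1/4)/Real.cos (π*(x+n)/2^(N+2))^2) := by ring
          _ = (1/4)^(N+1) * (1/Real.sin (π*(x+n)/2^(N+1))^2) := by rw [hq]
          _ = (1/4)^(N+1) / Real.sin (π*(x+n)/2^(N+1))^2 := by ring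
      show ∑ n ∈ Finset.Ico (-(2^(N+1):ℤ)) (2^(N+1)), f n = 1 / Real.sin (π*x)^2
      rw [← e2, Finset.sum_union (Finset.Ico_disjoint_Ico_consecutive _ _ _),
          ← e1, Finset.sum_union (Finset.Ico_disjoint_Ico_consecutive _ _ _)]
      rw [← eA, ← eC, Finset.sum_map, Finset.sum_map]
      simp only [addLeftEmbedding_apply, key_neg, key_pos]
      rw [show ∑ n ∈ Finset.Ico (0:ℤ) (2^N), g n + ∑ n ∈ Finset.Ico (-(2^N:ℤ)) (2^N), f n
          + ∑ n ∈ Finset.Ico (-(2^N:ℤ)) 0, g n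
          = ∑ n ∈ Finset.Ico (-(2^N:ℤ)) (2^N), f n
            + (∑ n ∈ Finset.Ico (-(2^N:ℤ)) 0, g n + ∑ n ∈ Finset.Ico (0:ℤ) (2^N), g n) from by ring]
      rw [← Finset.sum_union (Finset.Ico_disjoint_Ico_consecutive _ _ _), eB,
          ← Finset.sum_add_distrib]
      rw [Finset.sum_congr rfl (fun n _ => key n)]
      exact ih

lemma csc01 {x : ℝ} (h0 : 0 < x) (h1 : x < 1) :
    HasSum (fun n : ℤ => 1 / (π*(x + n))^2) (1 / Real.sin (π*x)^2) := by
  have hx : ∀ n : ℤ, x ≠ (n:ℝ) := by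
    intro n hn
    have ha : (0:ℝ) < n := hn ▸ h0
    have hb : (n:ℝ) < 1 := hn ▸ h1
    have ha' : 0 < n := by exact_mod_cast ha
    have hb' : n < 1 := by exact_mod_cast hb
    omega
  have hxn : ∀ n : ℤ, x + (n:ℝ) ≠ 0 := by
    intro n hn
    exact hx (-n) (by push_cast; linarith)
  -- the approximating family
  set F : ℕ → ℤ → ℝ := fun N n =>
    if n ∈ Finset.Ico (-(2^N:ℤ)) (2^N)
    then ((1:ℝ)/4)^(N+1) / Real.sin (π*(x + n)/2^(N+1))^2 else 0 with hF
  set g : ℤ → ℝ := fun n => 1 / (π*(x + n))^2 with hg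
  set bound : ℤ → ℝ := fun n => 1 / (x + n)^2 with hbound
  have hsummable : Summable bound := by
    have := (Real.summable_one_div_int_add_rpow x 2).2 (by norm_num)
    refine this.congr fun n => ?_
    have habs : |(n:ℝ)+x|^(2:ℝ) = (x+n)^2 := by
      rw [show (2:ℝ) = ((2:ℕ):ℝ) by norm_num, Real.rpow_natCast, sq_abs]
      ring
    rw [habs]
  -- each F N has tsum equal to the constant
  have htsum : ∀ N : ℕ, ∑' n : ℤ, F N n = 1 / Real.sin (π*x)^2 := by
    intro N
    rw [tsum_eq_sum (s := Finset.Ico (-(2^N:ℤ)) (2^N)) (fun b hb => if_neg hb)]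
    rw [← window hx N]
    exact Finset.sum_congr rfl fun n hn => if_pos hn
  -- pointwise convergence
  have hab : ∀ n : ℤ, Tendsto (fun N => F N n) atTop (𝓝 (g n)) := by
    intro n
    set c : ℝ := π*(x + n) with hc
    have hcne : c ≠ 0 := mul_ne_zero Real.pi_ne_zero (hxn n)
    have htN : Tendsto (fun N : ℕ => c * (1/2)^(N+1)) atTop (𝓝[≠] 0) := by
      apply tendsto_nhdsWithin_of_tendsto_nhds_of_eventually_within
      · have : Tendsto (fun N : ℕ => ((1:ℝ)/2)^(N+1)) atTop (𝓝 0) :=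
          (tendsto_pow_atTop_nhds_zero_of_lt_one (by norm_num) (by norm_num)).comp
            (tendsto_add_atTop_nat 1)
        simpa using this.const_mul c
      · filter_upwards with N
        simp only [Set.mem_compl_iff, Set.mem_singleton_iff]
        positivity
    have hslope : Tendsto (fun t : ℝ => Real.sin t / t) (𝓝[≠] 0) (𝓝 1) := by
      have hd := Real.hasDerivAt_sin 0
      rw [hasDerivAt_iff_tendsto_slope] at hd
      simp only [Real.cos_zero] at hd
      refine hd.congr' ?_
      filter_upwards [self_mem_nhdsWithin] with t ht
      simp [slope_def_field, div_eq_div_iff]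
    have h3 : Tendsto (fun N : ℕ => Real.sin (c*(1/2)^(N+1)) / (c*(1/2)^(N+1)))
        atTop (𝓝 1) := hslope.comp htN
    have h4 : Tendsto (fun N : ℕ =>
        (((Real.sin (c*(1/2)^(N+1)) / (c*(1/2)^(N+1)))^2)⁻¹) * (1/c^2)) atTop (𝓝 (g n)) := by
      have := ((h3.pow 2).inv₀ (by norm_num)).mul_const (1/c^2)
      simpa [hg, hc] using this
    have hev : ∀ᶠ N : ℕ in atTop, n ∈ Finset.Ico (-(2^N:ℤ)) (2^N) := by
      rw [eventually_atTop]
      refine ⟨n.natAbs + 1, fun N hN => ?_⟩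
      have h2 : (n.natAbs : ℤ) < 2^N := by
        calc (n.natAbs : ℤ) < N := by exact_mod_cast hN
          _ < 2^N := by exact_mod_cast Nat.lt_two_pow_self
      rw [Finset.mem_Ico]
      omega
    refine Tendsto.congr' ?_ h4
    filter_upwards [hev] with N hN
    symm
    rw [hF]
    simp only [if_pos hN]
    have harg : π*(x + (n:ℝ))/2^(N+1) = c*(1/2)^(N+1) := by
      rw [hc, div_eq_mul_inv, one_div, inv_pow]
    rw [harg]
    have hsne : Real.sin (c*(1/2)^(N+1)) ≠ 0 := by
      rw [← harg]; exact sin_ne hx (N+1) n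
    have htne : c*((1:ℝ)/2)^(N+1) ≠ 0 := by positivity
    have ht2 : (c*((1:ℝ)/2)^(N+1))^2 = c^2 * (1/4)^(N+1) := by
      have : ((1:ℝ)/2)^(N+1)*((1:ℝ)/2)^(N+1) = (1/4)^(N+1) := by
        rw [← mul_pow]; norm_num
      rw [mul_pow, ← this]; ring
    rw [div_pow (Real.sin (c*((1:ℝ)/2)^(N+1))) (c*((1:ℝ)/2)^(N+1)) 2, inv_div, ht2,
      div_mul_div_comm, mul_one, mul_comm (Real.sin (c*((1:ℝ)/2)^(N+1))^2) (c^2),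
      mul_div_mul_left _ _ (pow_ne_zero 2 hcne)]
  -- the uniform bound
  have hbnd : ∀ N : ℕ, ∀ n : ℤ, ‖F N n‖ ≤ bound n := by
    intro N n
    rw [hF, hbound]
    by_cases hmem : n ∈ Finset.Ico (-(2^N:ℤ)) (2^N)
    · simp only [if_pos hmem]
      set t : ℝ := π*(x + n)/2^(N+1) with htdef
      have hterm : (0:ℝ) ≤ ((1:ℝ)/4)^(N+1) / Real.sin t^2 := by positivity
      rw [Real.norm_eq_abs, abs_of_nonneg hterm]
      rw [Finset.mem_Ico] at hmem
      have hu : (0:ℝ) < 2^(N+1) := by positivity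
      have hcast : ((2:ℝ))^N = ((2^N : ℤ) : ℝ) := by push_cast; ring
      have habs : |x + (n:ℝ)| ≤ 2^N := by
        rw [abs_le]
        constructor
        · have : ((-(2^N:ℤ)):ℝ) ≤ (n:ℝ) := by exact_mod_cast hmem.1
          push_cast at this ⊢
          linarith
        · have : (n:ℝ) ≤ ((2^N:ℤ):ℝ) - 1 := by
            have : n ≤ 2^N - 1 := by omega
            exact_mod_cast this
          push_cast at this ⊢
          linarith
      have htle : |t| ≤ π/2 := by
        rw [htdef, abs_div, abs_of_pos hu, abs_mul, abs_of_pos Real.pi_pos,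
          div_le_iff₀ hu]
        have h2p : (2:ℝ)^(N+1) = 2*2^N := by ring
        calc π * |x + (n:ℝ)| ≤ π * 2^N := by
              exact mul_le_mul_of_nonneg_left habs Real.pi_pos.le
          _ = π/2 * (2*2^N) := by ring
          _ = π/2 * 2^(N+1) := by rw [h2p]
      have hjord : 2/π * |t| ≤ |Real.sin t| := by
        have h1 := Real.mul_le_sin (abs_nonneg t) htle
        have h2 : Real.sin |t| = |Real.sin t| := by
          rcases le_or_gt 0 t with h | h
          · rw [abs_of_nonneg h, abs_of_nonneg (Real.sin_nonneg_of_nonneg_of_le_pi h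
              (by rw [abs_of_nonneg h] at htle; linarith [Real.pi_pos]))]
          · have h0 : (0:ℝ) ≤ -t := by linarith
            have h3 := Real.sin_nonneg_of_nonneg_of_le_pi h0
              (by rw [abs_of_neg h] at htle; linarith [Real.pi_pos])
            rw [Real.sin_neg] at h3
            rw [abs_of_neg h, Real.sin_neg, abs_of_nonpos (by linarith)]
        rwa [h2] at h1
      have hsq : (2/π * |t|)^2 ≤ Real.sin t^2 := by
        have := pow_le_pow_left₀ (by positivity) hjord 2
        rwa [sq_abs] at this
      have hxn2 : (0:ℝ) < (x + n)^2 := by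
        have := hxn n; positivity
      have hkey : (x + (n:ℝ))^2 * ((1:ℝ)/4)^(N+1) ≤ Real.sin t^2 := by
        refine le_trans ?_ hsq
        have hip : ((2:ℝ)^(N+1))^2 * ((1:ℝ)/4)^(N+1) = 1 := by
          have h1 : ((2:ℝ)^(N+1))^2 = 4^(N+1) := by
            rw [← pow_mul, mul_comm (N+1) 2, pow_mul]
            norm_num
          rw [h1, ← mul_pow]
          norm_num
        have ht2 : (2/π * |t|)^2 = 4 * (x+(n:ℝ))^2 / ((2:ℝ)^(N+1))^2 := by
          rw [mul_pow, sq_abs, htdef]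
          field_simp
          ring
        rw [ht2, le_div_iff₀ (by positivity)]
        nlinarith [hip, hxn2]
      calc ((1:ℝ)/4)^(N+1) / Real.sin t^2
          ≤ ((1:ℝ)/4)^(N+1) / ((x + (n:ℝ))^2 * ((1:ℝ)/4)^(N+1)) := by
            gcongr <;> first
              | positivity
              | exact hkey
        _ = 1 / (x + (n:ℝ))^2 := by
            rw [div_mul_eq_div_div_swap]
            field_simp
    · simp only [if_neg hmem, norm_zero]
      positivity
  have hlim := tendsto_tsum_of_dominated_convergence hsummable hab
    (Eventually.of_forall fun N k => hbnd N k)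
  have hconst : Tendsto (fun _ : ℕ => 1 / Real.sin (π*x)^2) atTop (𝓝 (∑' n, g n)) :=
    hlim.congr fun N => htsum N
  have htsumg : ∑' n, g n = 1 / Real.sin (π*x)^2 :=
    tendsto_nhds_unique hconst tendsto_const_nhds
  have hgsum : Summable g := by
    refine hsummable.of_nonneg_of_le (fun n => by positivity) fun n => ?_
    rw [hg, hbound]
    have hxn2 : (0:ℝ) < (x + n)^2 := by have := hxn n; positivity
    refine one_div_le_one_div_of_le hxn2 ?_
    have hpi2 : (9:ℝ) ≤ π^2 := by nlinarith [Real.pi_gt_three]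
    rw [mul_pow]
    nlinarith [hpi2, hxn2]
  rw [← htsumg]
  exact hgsum.hasSum

lemma csc {x : ℝ} (hx : ∀ n : ℤ, x ≠ (n:ℝ)) :
    HasSum (fun n : ℤ => 1 / (π*(x + n))^2) (1 / Real.sin (π*x)^2) := by
  set m : ℤ := ⌊x⌋ with hm
  set y : ℝ := x - m with hy
  have h0 : 0 < y := by
    have h := Int.floor_le x
    have : x ≠ (m:ℝ) := hx m
    rw [hy]
    cases' lt_or_eq_of_le h with h' h'
    · linarith
    · exact absurd h'.symm this
  have h1 : y < 1 := by
    have := Int.lt_floor_add_one x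
    rw [hy]; linarith
  have base := csc01 h0 h1
  have h2 := (Equiv.hasSum_iff (Equiv.addRight m) (f := fun n : ℤ => 1 / (π*(y + n))^2)).2 base
  have hsin : Real.sin (π*y)^2 = Real.sin (π*x)^2 := by
    have h3 : π*x = π*y + m*π := by rw [hy]; ring
    rw [h3, Real.sin_add_int_mul_pi, mul_pow, negonesq, one_mul]
  rw [← hsin]
  refine h2.congr_fun ?_
  intro n
  simp only [Function.comp_apply, Equiv.coe_addRight]
  push_cast
  rw [hy]
  ring_nf

lemma fejer_zero : fejer 0 = 1/2 := by
  simp [fejer, _root_.sinc]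

lemma fejer_even_ne {k : ℤ} (hk : k ≠ 0) : fejer (2*k) = 0 := by
  have h2 : (2*(k:ℝ))/2 = (k:ℝ) := by ring
  have hkne : (k:ℝ) ≠ 0 := Int.cast_ne_zero.2 hk
  rw [fejer, h2, _root_.sinc, if_neg hkne]
  rw [show π * (k:ℝ) = (k:ℝ) * π by ring, Real.sin_int_mul_pi]
  norm_num

lemma fejer_eq {y : ℝ} (hy : y ≠ 0) :
    fejer y = (1/2) * Real.sin (π*(y/2))^2 / (π*(y/2))^2 := by
  have h2 : y/2 ≠ 0 := by intro h; exact hy (by linarith [h])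
  rw [fejer, _root_.sinc, if_neg h2, div_pow]
  ring

lemma even_part (z : ℝ) : HasSum (fun m : ℤ => fejer (z - 2*m)) (1/2) := by
  by_cases hz : ∃ m₀ : ℤ, z = 2*(m₀:ℝ)
  · obtain ⟨m₀, hm₀⟩ := hz
    have : (fun m : ℤ => fejer (z - 2*m)) = fun m => if m = m₀ then (1/2 : ℝ) else 0 := by
      funext m
      by_cases h : m = m₀
      · rw [h, hm₀, if_pos rfl, show 2*(m₀:ℝ) - 2*(m₀:ℝ) = 0 by ring, fejer_zero]
      · rw [if_neg h, hm₀]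
        have : 2*(m₀:ℝ) - 2*(m:ℝ) = 2*((m₀ - m : ℤ):ℝ) := by push_cast; ring
        rw [this, fejer_even_ne (by omega)]
    rw [this]
    exact hasSum_ite_eq m₀ (1/2)
  · push_neg at hz
    set x : ℝ := z/2 with hxdef
    have hx : ∀ n : ℤ, x ≠ (n:ℝ) := by
      intro n hn
      exact hz n (by rw [hxdef] at hn; linarith)
    have hsne := sin_ne' hx
    have base := (csc hx).mul_left (Real.sin (π*x)^2 / 2)
    have h2 := (Equiv.hasSum_iff (Equiv.neg ℤ)
      (f := fun n : ℤ => Real.sin (π*x)^2/2 * (1 / (π*(x + n))^2))).2 base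
    have hval : Real.sin (π*x)^2/2 * (1 / Real.sin (π*x)^2) = 1/2 := by
      field_simp
    rw [hval] at h2
    refine h2.congr_fun ?_
    intro m
    simp only [Function.comp_apply, Equiv.neg_apply]
    have hzm : z - 2*(m:ℝ) ≠ 0 := by
      intro h
      exact hz m (by linarith)
    rw [fejer_eq hzm]
    have harg : (z - 2*(m:ℝ))/2 = x + ((-m : ℤ):ℝ) := by
      rw [hxdef]; push_cast; ring
    rw [harg]
    have hsin2 : Real.sin (π*(x + ((-m:ℤ):ℝ)))^2 = Real.sin (π*x)^2 := by
      have h3 : π*(x + ((-m:ℤ):ℝ)) = π*x + (-m : ℤ)*π := by push_cast; ring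
      rw [h3, Real.sin_add_int_mul_pi, mul_pow, negonesq, one_mul]
    rw [hsin2]
    have hne : (π*(x + ((-m:ℤ):ℝ)))^2 ≠ 0 := by
      have := hx (-(-m))
      have h4 : x + ((-m:ℤ):ℝ) ≠ 0 := by
        intro h; apply hx (-(-m)); push_cast; push_cast at h; linarith
      positivity
    field_simp

lemma odd_part (z : ℝ) : HasSum (fun m : ℤ => fejer (z - (2*m+1))) (1/2) := by
  refine (even_part (z-1)).congr_fun fun m => ?_
  congr 1
  ring

noncomputable def eE : ℤ ≃ {n : ℤ | Even n} where
  toFun m := ⟨2*m, ⟨m, by ring⟩⟩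
  invFun n := n.1/2
  left_inv m := by simp only; omega
  right_inv n := by
    obtain ⟨r, hr⟩ := n.2
    apply Subtype.ext
    simp only
    omega

noncomputable def eO : ℤ ≃ ↥({n : ℤ | Even n}ᶜ) where
  toFun m := ⟨2*m+1, by
    simp only [Set.mem_compl_iff, Set.mem_setOf_eq, Int.even_iff]
    omega⟩
  invFun n := (n.1-1)/2
  left_inv m := by simp only; omega
  right_inv n := by
    have h := n.2
    simp only [Set.mem_compl_iff, Set.mem_setOf_eq, Int.even_iff] at h
    apply Subtype.ext
    simp only
    omega

theorem stmt16 : ∀ z : ℝ, HasSum (fun i : ℤ => fejer (z - ↑i)) 1 := by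
  intro z
  have hE : HasSum ((fun i : ℤ => fejer (z - ↑i)) ∘ ((↑) : {n : ℤ | Even n} → ℤ)) (1/2) := by
    refine (Equiv.hasSum_iff eE).1 ?_
    refine (even_part z).congr_fun fun m => ?_
    simp only [Function.comp_apply, eE, Equiv.coe_fn_mk]
    push_cast
    ring_nf
  have hO : HasSum ((fun i : ℤ => fejer (z - ↑i)) ∘ ((↑) : ↥({n : ℤ | Even n}ᶜ) → ℤ)) (1/2) := by
    refine (Equiv.hasSum_iff eO).1 ?_
    refine (odd_part z).congr_fun fun m => ?_
    simp only [Function.comp_apply, eO, Equiv.coe_fn_mk]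
    push_cast
    ring_nf
  have h := hE.add_isCompl isCompl_compl hO
  norm_num at h
  exact h
end
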